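/- arXiv:1201.2834 — 2 statements merged into one kernel-verified Lean document; each statement's English description precedes it below -/
import Mathlib

section
/- For every concurrent game structure G with safe set F ⊆ S and every ε > 0, there exist an integer k > 0 and a k-uniform player-1 selector ξ such that the memoryless strategy ξ̄ is ε-optimal for Safe(F), i.e., for all states s, inf_{σ₂} Pr_s^{ξ̄,σ₂}(Safe(F)) ≥ ⟨1⟩val(Safe(F))(s) − ε. -/
open scoped Classical

/-- A (two-player) concurrent game structure: a finite state space `S`, a finite
set `M` of moves, move assignments `Γ₁ Γ₂ : S → Finset M`, and a probabilistic
transition function `δ`. -/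
structure CGame (S : Type) (M : Type) where
  Γ₁ : S → Finset M
  Γ₂ : S → Finset M
  δ : S → M → M → S → ℝ

namespace CGame

variable {S M : Type} [Fintype S] [DecidableEq S] [Fintype M] [DecidableEq M]

/-- Well-formedness of a concurrent game structure: move sets are nonempty and
`δ s a b` is a probability distribution over states. -/
def IsGame (G : CGame S M) : Prop :=
  (∀ s, (G.Γ₁ s).Nonempty) ∧ (∀ s, (G.Γ₂ s).Nonempty) ∧
    (∀ s a b t, 0 ≤ G.δ s a b t) ∧ (∀ s a b, (∑ t, G.δ s a b t) = 1)

/-- `x : M → ℝ` is a probability distribution supported on `A`. -/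
def IsDistOn (A : Finset M) (x : M → ℝ) : Prop :=
  (∀ a, 0 ≤ x a) ∧ (∀ a, x a ≠ 0 → a ∈ A) ∧ (∑ a, x a) = 1

/-- A selector for player 1. -/
def IsSel1 (G : CGame S M) (ξ : S → M → ℝ) : Prop := ∀ s, IsDistOn (G.Γ₁ s) (ξ s)

/-- A selector for player 2. -/
def IsSel2 (G : CGame S M) (ξ : S → M → ℝ) : Prop := ∀ s, IsDistOn (G.Γ₂ s) (ξ s)

/-- A strategy for player 1: maps a history (past states `w` and current state `s`)
to a distribution over the moves available at `s`. -/
def IsStrat1 (G : CGame S M) (σ : List S → S → M → ℝ) : Prop :=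
  ∀ w s, IsDistOn (G.Γ₁ s) (σ w s)

/-- A strategy for player 2. -/
def IsStrat2 (G : CGame S M) (σ : List S → S → M → ℝ) : Prop :=
  ∀ w s, IsDistOn (G.Γ₂ s) (σ w s)

/-- The memoryless strategy induced by a selector. -/
def ml (ξ : S → M → ℝ) : List S → S → M → ℝ := fun _ s => ξ s

/-- The pure (Dirac) distribution on a move `b`. -/
def pureDist (b : M) : M → ℝ := fun b' => if b' = b then 1 else 0

/-- The player-1 selector choosing all available moves uniformly at random. -/
noncomputable def uniformSel (G : CGame S M) : S → M → ℝ :=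
  fun s a => if a ∈ G.Γ₁ s then (1 : ℝ) / (G.Γ₁ s).card else 0

/-- Probability of reaching `T` within `n` steps, starting from history `w`
and current state `s`, under strategies `σ₁, σ₂`. -/
noncomputable def reachW (G : CGame S M) (σ₁ σ₂ : List S → S → M → ℝ) (T : Set S) :
    ℕ → List S → S → ℝ
  | 0, _, s => if s ∈ T then 1 else 0
  | n + 1, w, s =>
      if s ∈ T then 1
      else ∑ a : M, ∑ b : M, ∑ t : S,
        σ₁ w s a * σ₂ w s b * G.δ s a b t * reachW G σ₁ σ₂ T n (w ++ [s]) t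

/-- Probability of staying in `F` for `n` steps, starting from history `w`
and current state `s`, under strategies `σ₁, σ₂`. -/
noncomputable def safeW (G : CGame S M) (σ₁ σ₂ : List S → S → M → ℝ) (F : Set S) :
    ℕ → List S → S → ℝ
  | 0, _, s => if s ∈ F then 1 else 0
  | n + 1, w, s =>
      if s ∈ F then
        ∑ a : M, ∑ b : M, ∑ t : S,
          σ₁ w s a * σ₂ w s b * G.δ s a b t * safeW G σ₁ σ₂ F n (w ++ [s]) t
      else 0

/-- `Pr_s^{σ₁,σ₂}(Reach T)`: probability of eventually reaching `T` from `s`. -/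
noncomputable def prReach (G : CGame S M) (σ₁ σ₂ : List S → S → M → ℝ) (T : Set S)
    (s : S) : ℝ :=
  ⨆ n : ℕ, reachW G σ₁ σ₂ T n [] s

/-- `Pr_s^{σ₁,σ₂}(Safe F)`: probability that the play stays in `F` forever. -/
noncomputable def prSafe (G : CGame S M) (σ₁ σ₂ : List S → S → M → ℝ) (F : Set S)
    (s : S) : ℝ :=
  ⨅ n : ℕ, safeW G σ₁ σ₂ F n [] s

/-- `⟨1⟩val^{σ₁}(Reach T)(s) = inf_{σ₂} Pr_s^{σ₁,σ₂}(Reach T)`. -/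
noncomputable def valReachUnder (G : CGame S M) (σ₁ : List S → S → M → ℝ) (T : Set S)
    (s : S) : ℝ :=
  ⨅ σ₂ : {σ // IsStrat2 G σ}, prReach G σ₁ σ₂.1 T s

/-- `⟨1⟩val(Reach T)(s) = sup_{σ₁} inf_{σ₂} Pr_s^{σ₁,σ₂}(Reach T)`. -/
noncomputable def valReach (G : CGame S M) (T : Set S) (s : S) : ℝ :=
  ⨆ σ₁ : {σ // IsStrat1 G σ}, valReachUnder G σ₁.1 T s

/-- `⟨1⟩val^{σ₁}(Safe F)(s) = inf_{σ₂} Pr_s^{σ₁,σ₂}(Safe F)`. -/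
noncomputable def valSafeUnder (G : CGame S M) (σ₁ : List S → S → M → ℝ) (F : Set S)
    (s : S) : ℝ :=
  ⨅ σ₂ : {σ // IsStrat2 G σ}, prSafe G σ₁ σ₂.1 F s

/-- `⟨1⟩val(Safe F)(s) = sup_{σ₁} inf_{σ₂} Pr_s^{σ₁,σ₂}(Safe F)`. -/
noncomputable def valSafe (G : CGame S M) (F : Set S) (s : S) : ℝ :=
  ⨆ σ₁ : {σ // IsStrat1 G σ}, valSafeUnder G σ₁.1 F s

/-- `W₂ = {s | ⟨1⟩val(Reach T)(s) = 0}`. -/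
noncomputable def W2 (G : CGame S M) (T : Set S) : Set S := {s | valReach G T s = 0}

/-- `W₁ = {s | ⟨1⟩val(Safe F)(s) = 1}`. -/
noncomputable def W1 (G : CGame S M) (F : Set S) : Set S := {s | valSafe G F s = 1}

/-- A state is absorbing if for all moves the successor is the state itself. -/
def Absorbing (G : CGame S M) (s : S) : Prop := ∀ a b, G.δ s a b s = 1

/-- A player-1 strategy is proper if against every player-2 strategy, from every
state the set `T ∪ W₂` is reached with probability 1. -/
noncomputable def Proper (G : CGame S M) (T : Set S) (σ₁ : List S → S → M → ℝ) : Prop :=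
  ∀ σ₂, IsStrat2 G σ₂ → ∀ s, prReach G σ₁ σ₂ (T ∪ W2 G T) s = 1

/-- `Pre_{ξ₁,ξ₂}(v)(s)`: one-step expectation of `v` at `s` when the players use the
one-state selectors `x, y`. -/
noncomputable def preSS (G : CGame S M) (v : S → ℝ) (s : S) (x y : M → ℝ) : ℝ :=
  ∑ a : M, ∑ b : M, ∑ t : S, v t * G.δ s a b t * x a * y b

/-- `Pre_{1:ξ₁}(v)(s) = inf_{ξ₂} Pre_{ξ₁,ξ₂}(v)(s)`. -/
noncomputable def pre1Sel (G : CGame S M) (v : S → ℝ) (s : S) (x : M → ℝ) : ℝ :=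
  ⨅ y : {y : M → ℝ // IsDistOn (G.Γ₂ s) y}, preSS G v s x y.1

/-- `Pre₁(v)(s) = sup_{ξ₁} inf_{ξ₂} Pre_{ξ₁,ξ₂}(v)(s)`. -/
noncomputable def pre1 (G : CGame S M) (v : S → ℝ) (s : S) : ℝ :=
  ⨆ x : {x : M → ℝ // IsDistOn (G.Γ₁ s) x}, pre1Sel G v s x.1

/-- The value-iteration sequence: `u 0 = [T]`, `u (k+1) = Pre₁ (u k)`. -/
noncomputable def valIter (G : CGame S M) (T : Set S) : ℕ → S → ℝ
  | 0 => fun s => if s ∈ T then 1 else 0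
  | n + 1 => fun s => pre1 G (valIter G T n) s

/-- The entry time `ℓ_k(s) = min {j ≤ k | u_j(s) = u_k(s)}`. -/
noncomputable def entryTime (G : CGame S M) (T : Set S) (k : ℕ) (s : S) : ℕ :=
  sInf {j : ℕ | valIter G T j s = valIter G T k s}

/-- `dest(s,b)` under a player-1 selector `η`: possible successors of `s` when
player 1 plays `η` and player 2 plays `b`. -/
def destSet (G : CGame S M) (η : S → M → ℝ) (s : S) (b : M) : Set S :=
  {t | ∃ a, η s a ≠ 0 ∧ G.δ s a b t ≠ 0}

/-- `OptSel(v,s)`: the set of optimal one-state player-1 selectors for `v` at `s`. -/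
noncomputable def OptSel (G : CGame S M) (v : S → ℝ) (s : S) : Set (M → ℝ) :=
  {x | IsDistOn (G.Γ₁ s) x ∧ pre1Sel G v s x = pre1 G v s}

/-- `CountOpt(v,s,x)`: the set of counter-optimal player-2 moves against `x`. -/
noncomputable def countOpt (G : CGame S M) (v : S → ℝ) (s : S) (x : M → ℝ) : Finset M :=
  (G.Γ₂ s).filter fun b => preSS G v s x (pureDist b) = pre1 G v s

/-- The support of a one-state selector, as a `Finset`. -/
noncomputable def fsupp (x : M → ℝ) : Finset M := Finset.univ.filter fun a => x a ≠ 0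

/-- `OptSelCount(v,s)`: pairs `(A,B)` such that some optimal selector has support `A`
and counter-optimal action set `B`. -/
noncomputable def optSelCount (G : CGame S M) (v : S → ℝ) (s : S) :
    Set (Finset M × Finset M) :=
  {p | ∃ x ∈ OptSel G v s, fsupp x = p.1 ∧ countOpt G v s x = p.2}

/-- A selector is `k`-uniform if every probability it assigns is of the form `i/j`
with `0 ≤ i ≤ j ≤ k`. -/
def KUniform (k : ℕ) (ξ : S → M → ℝ) : Prop :=
  ∀ s a, ∃ i j : ℕ, i ≤ j ∧ j ≤ k ∧ ξ s a = (i : ℝ) / (j : ℝ)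

end CGame
set_option linter.unusedSectionVars false
set_option maxHeartbeats 1000000

namespace CGame

variable {S M : Type} [Fintype S] [DecidableEq S] [Fintype M] [DecidableEq M]

/-! ### Basic facts about distributions -/

lemma IsDistOn.nonneg {A : Finset M} {x : M → ℝ} (h : IsDistOn A x) (a : M) : 0 ≤ x a := h.1 a

lemma IsDistOn.sum_one {A : Finset M} {x : M → ℝ} (h : IsDistOn A x) : ∑ a, x a = 1 := h.2.2

lemma IsDistOn.le_one {A : Finset M} {x : M → ℝ} (h : IsDistOn A x) (a : M) : x a ≤ 1 := by
  have := Finset.single_le_sum (f := x) (fun a _ => h.1 a) (Finset.mem_univ a)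
  rw [h.2.2] at this; exact this

lemma IsDistOn.zero_of_not_mem {A : Finset M} {x : M → ℝ} (h : IsDistOn A x) {a : M}
    (ha : a ∉ A) : x a = 0 := by
  by_contra hne; exact ha (h.2.1 a hne)

/-- uniform distribution on a finset, with rational values. -/
noncomputable def unifQ (A : Finset M) : M → ℚ := fun a => if a ∈ A then (A.card : ℚ)⁻¹ else 0

lemma isDistOn_unifQ {A : Finset M} (hA : A.Nonempty) :
    IsDistOn A (fun a => ((unifQ A a : ℚ) : ℝ)) := by
  have hc : (0:ℝ) < (A.card : ℝ) := by
    exact_mod_cast Finset.card_pos.mpr hA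
  refine ⟨fun a => ?_, fun a ha => ?_, ?_⟩
  · simp only [unifQ]
    split
    · push_cast; positivity
    · simp
  · simp only [unifQ] at ha
    by_contra hmem
    rw [if_neg hmem] at ha; simp at ha
  · simp only [unifQ, apply_ite (fun q : ℚ => (q : ℝ))]
    push_cast
    rw [Finset.sum_ite_mem, Finset.univ_inter, Finset.sum_const, nsmul_eq_mul]
    field_simp

lemma isDistOn_pureDist {A : Finset M} {b : M} (hb : b ∈ A) : IsDistOn A (pureDist b) := by
  refine ⟨fun a => ?_, fun a ha => ?_, ?_⟩
  · unfold pureDist; split <;> norm_num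
  · unfold pureDist at ha
    by_cases hab : a = b
    · subst hab; exact hb
    · rw [if_neg hab] at ha; simp at ha
  · simp [pureDist]

/-- the canonical player-2 strategy: uniform everywhere. -/
noncomputable def unifStrat2 (G : CGame S M) : List S → S → M → ℝ :=
  fun _ s a => ((unifQ (G.Γ₂ s) a : ℚ) : ℝ)

lemma isStrat2_unifStrat2 {G : CGame S M} (hG : G.IsGame) : IsStrat2 G (unifStrat2 G) :=
  fun _ s => isDistOn_unifQ (hG.2.1 s)

noncomputable def unifStrat1 (G : CGame S M) : List S → S → M → ℝ :=
  fun _ s a => ((unifQ (G.Γ₁ s) a : ℚ) : ℝ)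

lemma isStrat1_unifStrat1 {G : CGame S M} (hG : G.IsGame) : IsStrat1 G (unifStrat1 G) :=
  fun _ s => isDistOn_unifQ (hG.1 s)

lemma nonempty_strat2 {G : CGame S M} (hG : G.IsGame) : Nonempty {σ // IsStrat2 G σ} :=
  ⟨⟨unifStrat2 G, isStrat2_unifStrat2 hG⟩⟩

lemma nonempty_strat1 {G : CGame S M} (hG : G.IsGame) : Nonempty {σ // IsStrat1 G σ} :=
  ⟨⟨unifStrat1 G, isStrat1_unifStrat1 hG⟩⟩

end CGame

namespace CGame

variable {S M : Type} [Fintype S] [DecidableEq S] [Fintype M] [DecidableEq M]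
variable {G : CGame S M} {F : Set S}

/-! ### Basic facts about `safeW` -/

lemma safeW_zero (σ₁ σ₂ : List S → S → M → ℝ) (w : List S) (s : S) :
    safeW G σ₁ σ₂ F 0 w s = if s ∈ F then 1 else 0 := rfl

lemma safeW_succ (σ₁ σ₂ : List S → S → M → ℝ) (n : ℕ) (w : List S) (s : S) :
    safeW G σ₁ σ₂ F (n + 1) w s =
      if s ∈ F then
        ∑ a : M, ∑ b : M, ∑ t : S,
          σ₁ w s a * σ₂ w s b * G.δ s a b t * safeW G σ₁ σ₂ F n (w ++ [s]) t
      else 0 := rfl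

lemma safeW_nonneg (hG : G.IsGame) {σ₁ σ₂ : List S → S → M → ℝ}
    (h1 : IsStrat1 G σ₁) (h2 : IsStrat2 G σ₂) :
    ∀ (n : ℕ) (w : List S) (s : S), 0 ≤ safeW G σ₁ σ₂ F n w s := by
  intro n
  induction n with
  | zero => intro w s; rw [safeW_zero]; split <;> norm_num
  | succ n ih =>
    intro w s; rw [safeW_succ]
    split
    · refine Finset.sum_nonneg fun a _ => Finset.sum_nonneg fun b _ =>
        Finset.sum_nonneg fun t _ => ?_
      have := (h1 w s).nonneg a
      have := (h2 w s).nonneg b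
      have := hG.2.2.1 s a b t
      have := ih (w ++ [s]) t
      positivity
    · exact le_refl 0

lemma sum_sum_sum_delta (hG : G.IsGame) {x y : M → ℝ}
    (hx : ∑ a, x a = 1) (hy : ∑ b, y b = 1) (s : S) :
    ∑ a : M, ∑ b : M, ∑ t : S, x a * y b * G.δ s a b t = 1 := by
  have : ∀ a b, ∑ t : S, x a * y b * G.δ s a b t = x a * y b := by
    intro a b
    rw [← Finset.mul_sum, hG.2.2.2 s a b, mul_one]
  simp only [this]
  have : ∀ a, ∑ b : M, x a * y b = x a := by
    intro a; rw [← Finset.mul_sum, hy, mul_one]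
  simp only [this, hx]

lemma safeW_le_one (hG : G.IsGame) {σ₁ σ₂ : List S → S → M → ℝ}
    (h1 : IsStrat1 G σ₁) (h2 : IsStrat2 G σ₂) :
    ∀ (n : ℕ) (w : List S) (s : S), safeW G σ₁ σ₂ F n w s ≤ 1 := by
  intro n
  induction n with
  | zero => intro w s; rw [safeW_zero]; split <;> norm_num
  | succ n ih =>
    intro w s; rw [safeW_succ]
    split
    · calc ∑ a : M, ∑ b : M, ∑ t : S,
            σ₁ w s a * σ₂ w s b * G.δ s a b t * safeW G σ₁ σ₂ F n (w ++ [s]) t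
          ≤ ∑ a : M, ∑ b : M, ∑ t : S, σ₁ w s a * σ₂ w s b * G.δ s a b t := by
            refine Finset.sum_le_sum fun a _ => Finset.sum_le_sum fun b _ =>
              Finset.sum_le_sum fun t _ => ?_
            have hnn : 0 ≤ σ₁ w s a * σ₂ w s b * G.δ s a b t := by
              have := (h1 w s).nonneg a
              have := (h2 w s).nonneg b
              have := hG.2.2.1 s a b t
              positivity
            exact mul_le_of_le_one_right hnn (ih (w ++ [s]) t)
        _ = 1 := sum_sum_sum_delta hG (h1 w s).sum_one (h2 w s).sum_one s
    · norm_num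

lemma safeW_succ_le (hG : G.IsGame) {σ₁ σ₂ : List S → S → M → ℝ}
    (h1 : IsStrat1 G σ₁) (h2 : IsStrat2 G σ₂) :
    ∀ (n : ℕ) (w : List S) (s : S), safeW G σ₁ σ₂ F (n+1) w s ≤ safeW G σ₁ σ₂ F n w s := by
  intro n
  induction n with
  | zero =>
    intro w s
    rw [safeW_zero]
    split
    · exact safeW_le_one hG h1 h2 1 w s
    · rw [safeW_succ, if_neg (by assumption)]
  | succ n ih =>
    intro w s
    rw [safeW_succ, safeW_succ]
    split
    · refine Finset.sum_le_sum fun a _ => Finset.sum_le_sum fun b _ =>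
        Finset.sum_le_sum fun t _ => ?_
      have hnn : 0 ≤ σ₁ w s a * σ₂ w s b * G.δ s a b t := by
        have := (h1 w s).nonneg a
        have := (h2 w s).nonneg b
        have := hG.2.2.1 s a b t
        positivity
      exact mul_le_mul_of_nonneg_left (ih (w ++ [s]) t) hnn
    · exact le_refl 0

lemma safeW_antitone (hG : G.IsGame) {σ₁ σ₂ : List S → S → M → ℝ}
    (h1 : IsStrat1 G σ₁) (h2 : IsStrat2 G σ₂) {n m : ℕ} (hnm : n ≤ m) (w : List S) (s : S) :
    safeW G σ₁ σ₂ F m w s ≤ safeW G σ₁ σ₂ F n w s := by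
  induction m with
  | zero =>
      have : n = 0 := Nat.le_zero.mp hnm
      subst this; exact le_refl _
  | succ m ih =>
    rcases Nat.eq_or_lt_of_le hnm with h | h
    · subst h; exact le_refl _
    · exact le_trans (safeW_succ_le hG h1 h2 m w s) (ih (Nat.lt_succ_iff.mp h))

/-- shifting histories -/
lemma safeW_shift {σ₁ σ₂ : List S → S → M → ℝ} (w₀ : List S) :
    ∀ (n : ℕ) (w : List S) (s : S),
      safeW G σ₁ σ₂ F n (w₀ ++ w) s =
        safeW G (fun w' => σ₁ (w₀ ++ w')) (fun w' => σ₂ (w₀ ++ w')) F n w s := by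
  intro n
  induction n with
  | zero => intro w s; rfl
  | succ n ih =>
    intro w s
    rw [safeW_succ, safeW_succ]
    split
    · refine Finset.sum_congr rfl fun a _ => Finset.sum_congr rfl fun b _ =>
        Finset.sum_congr rfl fun t _ => ?_
      rw [List.append_assoc, ih (w ++ [s]) t]
    · rfl

/-- `safeW` only depends on the strategies along relevant histories. -/
lemma safeW_congr {σ₁ σ₂ σ₂' : List S → S → M → ℝ} :
    ∀ (n : ℕ) (w : List S) (s : S),
      (∀ (w₂ : List S) (u₂ : S),
        ((w₂ = w ∧ u₂ = s) ∨ (∃ r, w₂ = w ++ s :: r)) → σ₂ w₂ u₂ = σ₂' w₂ u₂) →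
      safeW G σ₁ σ₂ F n w s = safeW G σ₁ σ₂' F n w s := by
  intro n
  induction n with
  | zero => intro w s _; rfl
  | succ n ih =>
    intro w s hagree
    rw [safeW_succ, safeW_succ]
    split
    · refine Finset.sum_congr rfl fun a _ => Finset.sum_congr rfl fun b _ =>
        Finset.sum_congr rfl fun t _ => ?_
      rw [hagree w s (Or.inl ⟨rfl, rfl⟩)]
      rw [ih (w ++ [s]) t ?_]
      intro w₂ u₂ h
      refine hagree w₂ u₂ (Or.inr ?_)
      rcases h with ⟨hw, _⟩ | ⟨r, hw⟩
      · exact ⟨[], by simp [hw]⟩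
      · exact ⟨t :: r, by simp [hw]⟩
    · rfl

end CGame

namespace CGame

variable {S M : Type} [Fintype S] [DecidableEq S] [Fintype M] [DecidableEq M]
variable {G : CGame S M} {F : Set S}

/-! ### Basic facts about `prSafe`, `valSafeUnder`, `valSafe` -/

lemma prSafe_le_safeW (hG : G.IsGame) {σ₁ σ₂ : List S → S → M → ℝ}
    (h1 : IsStrat1 G σ₁) (h2 : IsStrat2 G σ₂) (n : ℕ) (s : S) :
    prSafe G σ₁ σ₂ F s ≤ safeW G σ₁ σ₂ F n [] s := by
  refine ciInf_le ⟨0, ?_⟩ n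
  rintro x ⟨m, rfl⟩
  exact safeW_nonneg hG h1 h2 m [] s

lemma prSafe_nonneg (hG : G.IsGame) {σ₁ σ₂ : List S → S → M → ℝ}
    (h1 : IsStrat1 G σ₁) (h2 : IsStrat2 G σ₂) (s : S) :
    0 ≤ prSafe G σ₁ σ₂ F s :=
  le_ciInf fun n => safeW_nonneg hG h1 h2 n [] s

lemma prSafe_le_one (hG : G.IsGame) {σ₁ σ₂ : List S → S → M → ℝ}
    (h1 : IsStrat1 G σ₁) (h2 : IsStrat2 G σ₂) (s : S) :
    prSafe G σ₁ σ₂ F s ≤ 1 :=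
  le_trans (prSafe_le_safeW hG h1 h2 0 s) (safeW_le_one hG h1 h2 0 [] s)

lemma valSafeUnder_le_prSafe (hG : G.IsGame) {σ₁ σ₂ : List S → S → M → ℝ}
    (h1 : IsStrat1 G σ₁) (h2 : IsStrat2 G σ₂) (s : S) :
    valSafeUnder G σ₁ F s ≤ prSafe G σ₁ σ₂ F s := by
  have hb : BddBelow (Set.range fun σ : {σ // IsStrat2 G σ} => prSafe G σ₁ σ.1 F s) := by
    refine ⟨0, ?_⟩
    rintro x ⟨σ, rfl⟩
    exact prSafe_nonneg hG h1 σ.2 s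
  exact ciInf_le hb ⟨σ₂, h2⟩

lemma valSafeUnder_nonneg (hG : G.IsGame) {σ₁ : List S → S → M → ℝ}
    (h1 : IsStrat1 G σ₁) (s : S) : 0 ≤ valSafeUnder G σ₁ F s := by
  have : Nonempty {σ // IsStrat2 G σ} := nonempty_strat2 hG
  exact le_ciInf fun σ => prSafe_nonneg hG h1 σ.2 s

lemma valSafeUnder_le_one (hG : G.IsGame) {σ₁ : List S → S → M → ℝ}
    (h1 : IsStrat1 G σ₁) (s : S) : valSafeUnder G σ₁ F s ≤ 1 :=
  le_trans (valSafeUnder_le_prSafe hG h1 (isStrat2_unifStrat2 hG) s)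
    (prSafe_le_one hG h1 (isStrat2_unifStrat2 hG) s)

lemma valSafeUnder_le_valSafe (hG : G.IsGame) {σ₁ : List S → S → M → ℝ}
    (h1 : IsStrat1 G σ₁) (s : S) : valSafeUnder G σ₁ F s ≤ valSafe G F s := by
  unfold valSafe
  refine le_ciSup_of_le (f := fun σ : {σ // IsStrat1 G σ} => valSafeUnder G σ.1 F s) ?_ ⟨σ₁, h1⟩ (le_refl _)
  refine ⟨1, ?_⟩
  rintro x ⟨σ, rfl⟩
  exact valSafeUnder_le_one hG σ.2 s

lemma valSafe_le (hG : G.IsGame) {r : ℝ} (s : S)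
    (h : ∀ σ₁ : List S → S → M → ℝ, IsStrat1 G σ₁ → valSafeUnder G σ₁ F s ≤ r) :
    valSafe G F s ≤ r := by
  have : Nonempty {σ // IsStrat1 G σ} := nonempty_strat1 hG
  exact ciSup_le fun σ => h σ.1 σ.2

lemma valSafe_nonneg (hG : G.IsGame) (s : S) : 0 ≤ valSafe G F s :=
  le_trans (valSafeUnder_nonneg hG (isStrat1_unifStrat1 hG) s)
    (valSafeUnder_le_valSafe hG (isStrat1_unifStrat1 hG) s)

lemma valSafe_le_one (hG : G.IsGame) (s : S) : valSafe G F s ≤ 1 :=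
  valSafe_le hG s fun σ₁ h1 => valSafeUnder_le_one hG h1 s

lemma valSafe_off (hG : G.IsGame) {s : S} (hs : s ∉ F) : valSafe G F s = 0 := by
  refine le_antisymm (valSafe_le hG s fun σ₁ h1 => ?_) (valSafe_nonneg hG s)
  calc valSafeUnder G σ₁ F s ≤ prSafe G σ₁ (unifStrat2 G) F s :=
        valSafeUnder_le_prSafe hG h1 (isStrat2_unifStrat2 hG) s
    _ ≤ safeW G σ₁ (unifStrat2 G) F 0 [] s :=
        prSafe_le_safeW hG h1 (isStrat2_unifStrat2 hG) 0 s
    _ = 0 := by rw [safeW_zero, if_neg hs]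

end CGame

namespace CGame

variable {S M : Type} [Fintype S] [DecidableEq S] [Fintype M] [DecidableEq M]
variable {G : CGame S M} {F : Set S}

/-! ### Part (A): a subfixpoint certificate bounds the value of a memoryless strategy -/

lemma isStrat1_ml {ξ : S → M → ℝ} (hξ : IsSel1 G ξ) : IsStrat1 G (ml ξ) :=
  fun _ s => hξ s

lemma le_safeW_of_subfix (hG : G.IsGame) {ξ : S → M → ℝ} (hξ : IsSel1 G ξ)
    {v : S → ℝ} (h1 : ∀ t, v t ≤ 1) (hF : ∀ t, t ∉ F → v t = 0)
    (hfix : ∀ s ∈ F, ∀ b ∈ G.Γ₂ s, v s ≤ ∑ a, (∑ t, v t * G.δ s a b t) * ξ s a)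
    {σ₂ : List S → S → M → ℝ} (h2 : IsStrat2 G σ₂) :
    ∀ (n : ℕ) (w : List S) (s : S), v s ≤ safeW G (ml ξ) σ₂ F n w s := by
  intro n
  induction n with
  | zero =>
    intro w s
    rw [safeW_zero]
    split
    · exact h1 s
    · rw [hF s (by assumption)]
  | succ n ih =>
    intro w s
    rw [safeW_succ]
    split
    case isFalse hs => rw [hF s hs]
    case isTrue hs =>
    have hδ : ∀ s a b t, 0 ≤ G.δ s a b t := hG.2.2.1
    calc v s = ∑ b : M, σ₂ w s b * v s := by
          rw [← Finset.sum_mul, (h2 w s).sum_one, one_mul]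
      _ ≤ ∑ b : M, σ₂ w s b * (∑ a, (∑ t, v t * G.δ s a b t) * ξ s a) := by
          refine Finset.sum_le_sum fun b _ => ?_
          rcases eq_or_ne (σ₂ w s b) 0 with h | h
          · rw [h, zero_mul, zero_mul]
          · exact mul_le_mul_of_nonneg_left (hfix s hs b ((h2 w s).2.1 b h))
              ((h2 w s).nonneg b)
      _ = ∑ a : M, ∑ b : M, ∑ t : S, ml ξ w s a * σ₂ w s b * G.δ s a b t * v t := by
          rw [Finset.sum_comm]
          refine Finset.sum_congr rfl fun b _ => ?_
          rw [Finset.mul_sum]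
          refine Finset.sum_congr rfl fun a _ => ?_
          rw [Finset.sum_mul, Finset.mul_sum]
          refine Finset.sum_congr rfl fun t _ => ?_
          show σ₂ w s b * (v t * G.δ s a b t * ξ s a) = ξ s a * σ₂ w s b * G.δ s a b t * v t
          ring
      _ ≤ ∑ a : M, ∑ b : M, ∑ t : S,
            ml ξ w s a * σ₂ w s b * G.δ s a b t * safeW G (ml ξ) σ₂ F n (w ++ [s]) t := by
          refine Finset.sum_le_sum fun a _ => Finset.sum_le_sum fun b _ =>
            Finset.sum_le_sum fun t _ => ?_
          have hnn : 0 ≤ ml ξ w s a * σ₂ w s b * G.δ s a b t := by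
            have := (hξ s).nonneg a
            have := (h2 w s).nonneg b
            have := hδ s a b t
            show 0 ≤ ξ s a * σ₂ w s b * G.δ s a b t
            positivity
          exact mul_le_mul_of_nonneg_left (ih (w ++ [s]) t) hnn

lemma le_valSafeUnder_of_subfix (hG : G.IsGame) {ξ : S → M → ℝ} (hξ : IsSel1 G ξ)
    {v : S → ℝ} (h1 : ∀ t, v t ≤ 1) (hF : ∀ t, t ∉ F → v t = 0)
    (hfix : ∀ s ∈ F, ∀ b ∈ G.Γ₂ s, v s ≤ ∑ a, (∑ t, v t * G.δ s a b t) * ξ s a)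
    (s : S) : v s ≤ valSafeUnder G (ml ξ) F s := by
  have : Nonempty {σ // IsStrat2 G σ} := nonempty_strat2 hG
  refine le_ciInf fun σ => le_ciInf fun n => ?_
  exact le_safeW_of_subfix hG hξ h1 hF hfix σ.2 n [] s

end CGame

namespace CGame

variable {S M : Type} [Fintype S] [DecidableEq S] [Fintype M] [DecidableEq M]
variable {G : CGame S M} {F : Set S}

/-! ### The Bellman-type inequality via strategy surgery -/

lemma valSafeUnder_le_step (hG : G.IsGame) {s : S} (hs : s ∈ F)
    {σ₁ : List S → S → M → ℝ} (h1 : IsStrat1 G σ₁) {bs : M} (hb : bs ∈ G.Γ₂ s)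
    {η : ℝ} (hη : 0 < η) :
    valSafeUnder G σ₁ F s ≤
      ∑ a, (∑ t, valSafe G F t * G.δ s a bs t) * σ₁ [] s a + 2 * η := by
  classical
  have hne2 : Nonempty {σ // IsStrat2 G σ} := nonempty_strat2 hG
  set σ₁' : List S → S → M → ℝ := fun w' => σ₁ ([s] ++ w') with hσ₁'
  have h1' : IsStrat1 G σ₁' := fun w u => h1 _ u
  -- near-optimal replies for every start state
  have ht : ∀ t : S, ∃ p : {σ // IsStrat2 G σ},
      prSafe G σ₁' p.1 F t < valSafe G F t + η := by
    intro t
    refine exists_lt_of_ciInf_lt ?_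
    calc valSafeUnder G σ₁' F t ≤ valSafe G F t := valSafeUnder_le_valSafe hG h1' t
      _ < valSafe G F t + η := by linarith
  choose σT hσT using ht
  have hn : ∀ t : S, ∃ n : ℕ,
      safeW G σ₁' (σT t).1 F n [] t < valSafe G F t + 2 * η := by
    intro t
    refine exists_lt_of_ciInf_lt ?_
    calc prSafe G σ₁' (σT t).1 F t < valSafe G F t + η := hσT t
      _ < valSafe G F t + 2 * η := by linarith
  choose NT hNT using hn
  set N : ℕ := Finset.univ.sup NT with hN
  -- the composed player-2 strategy
  set σA : List S → S → M → ℝ := fun w u =>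
    match w with
    | [] => if bs ∈ G.Γ₂ u then pureDist bs else fun a => ((unifQ (G.Γ₂ u) a : ℚ) : ℝ)
    | _ :: w' => (σT (match w' with | [] => u | t :: _ => t)).1 w' u
    with hσA
  have hA : IsStrat2 G σA := by
    intro w u
    match w with
    | [] =>
      show IsDistOn (G.Γ₂ u) (if bs ∈ G.Γ₂ u then pureDist bs else _)
      split
      · exact isDistOn_pureDist (by assumption)
      · exact isDistOn_unifQ (hG.2.1 u)
    | _ :: w' => exact (σT _).2 w' u
  have hAs : σA [] s = pureDist bs := by
    show (if bs ∈ G.Γ₂ s then pureDist bs else _) = pureDist bs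
    rw [if_pos hb]
  -- key pointwise bound for the continuations
  have hcont : ∀ t : S, safeW G σ₁ σA F N [s] t ≤ valSafe G F t + 2 * η := by
    intro t
    have e1 : safeW G σ₁ σA F N [s] t = safeW G σ₁' (σT t).1 F N [] t := by
      have e0 : ([s] : List S) = [s] ++ ([] : List S) := by simp
      rw [e0, safeW_shift]
      refine safeW_congr N [] t ?_
      rintro w₂ u₂ (⟨rfl, rfl⟩ | ⟨r, rfl⟩)
      · rfl
      · rfl
    rw [e1]
    calc safeW G σ₁' (σT t).1 F N [] t ≤ safeW G σ₁' (σT t).1 F (NT t) [] t :=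
          safeW_antitone hG h1' (σT t).2 (Finset.le_sup (Finset.mem_univ t)) [] t
      _ ≤ valSafe G F t + 2 * η := le_of_lt (hNT t)
  -- main chain
  calc valSafeUnder G σ₁ F s ≤ prSafe G σ₁ σA F s := valSafeUnder_le_prSafe hG h1 hA s
    _ ≤ safeW G σ₁ σA F (N + 1) [] s := prSafe_le_safeW hG h1 hA (N + 1) s
    _ = ∑ a : M, ∑ t : S, σ₁ [] s a * G.δ s a bs t * safeW G σ₁ σA F N [s] t := by
        rw [safeW_succ, if_pos hs]
        refine Finset.sum_congr rfl fun a _ => ?_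
        rw [Finset.sum_comm]
        refine Finset.sum_congr rfl fun t _ => ?_
        rw [hAs]
        rw [Finset.sum_eq_single_of_mem bs (Finset.mem_univ bs)
          (fun b _ hne => by simp [pureDist, hne])]
        simp [pureDist]
    _ ≤ ∑ a : M, ∑ t : S, σ₁ [] s a * G.δ s a bs t * (valSafe G F t + 2 * η) := by
        refine Finset.sum_le_sum fun a _ => Finset.sum_le_sum fun t _ => ?_
        have hnn : 0 ≤ σ₁ [] s a * G.δ s a bs t := by
          have := (h1 [] s).nonneg a
          have := hG.2.2.1 s a bs t
          positivity
        exact mul_le_mul_of_nonneg_left (hcont t) hnn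
    _ = ∑ a, (∑ t, valSafe G F t * G.δ s a bs t) * σ₁ [] s a + 2 * η := by
        have e2 : ∀ a t, σ₁ [] s a * G.δ s a bs t * (valSafe G F t + 2 * η) =
            valSafe G F t * G.δ s a bs t * σ₁ [] s a + 2 * η * σ₁ [] s a * G.δ s a bs t := by
          intro a t; ring
        simp only [e2, Finset.sum_add_distrib]
        congr 1
        · exact Finset.sum_congr rfl fun a _ => by rw [← Finset.sum_mul]
        · have e4 : ∀ a, ∑ t, (2 * η * σ₁ [] s a) * G.δ s a bs t = 2 * η * σ₁ [] s a := by
            intro a; rw [← Finset.mul_sum, hG.2.2.2 s a bs, mul_one]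
          simp only [e4]
          rw [← Finset.mul_sum, (h1 [] s).sum_one, mul_one]

end CGame

namespace CGame

variable {S M : Type} [Fintype S] [DecidableEq S] [Fintype M] [DecidableEq M]
variable {G : CGame S M} {F : Set S}

private lemma continuous_finset_inf' {α : Type*} {A : Finset α} (hA : A.Nonempty)
    {f : α → (M → ℝ) → ℝ} (hf : ∀ b, Continuous (f b)) :
    Continuous fun x => A.inf' hA fun b => f b x := by
  induction hA using Finset.Nonempty.cons_induction with
  | singleton a => simpa using hf a
  | cons a A ha hAne ih =>
    have : (fun x => (Finset.cons a A ha).inf' (by simp) fun b => f b x) =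
        fun x => min (f a x) (A.inf' hAne fun b => f b x) := by
      funext x
      rw [Finset.inf'_cons]
    rw [this]
    exact (hf a).min ih

lemma isCompact_distOn (A : Finset M) : IsCompact {x : M → ℝ | IsDistOn A x} := by
  have hD_eq : {x : M → ℝ | IsDistOn A x} =
      (⋂ a, {x : M → ℝ | 0 ≤ x a}) ∩
        ((⋂ a, {x : M → ℝ | x a ≠ 0 → a ∈ A}) ∩ {x : M → ℝ | ∑ a, x a = 1}) := by
    ext x
    simp only [Set.mem_setOf_eq, Set.mem_inter_iff, Set.mem_iInter, IsDistOn]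
  have hclosed : IsClosed {x : M → ℝ | IsDistOn A x} := by
    rw [hD_eq]
    refine IsClosed.inter ?_ (IsClosed.inter ?_ ?_)
    · exact isClosed_iInter fun a => isClosed_le continuous_const (continuous_apply a)
    · refine isClosed_iInter fun a => ?_
      by_cases hmem : a ∈ A
      · have : {x : M → ℝ | x a ≠ 0 → a ∈ A} = Set.univ := by
          ext x; simp [hmem]
        rw [this]; exact isClosed_univ
      · have : {x : M → ℝ | x a ≠ 0 → a ∈ A} = {x : M → ℝ | x a = 0} := by
          ext x; simp [hmem]
        rw [this]; exact isClosed_eq (continuous_apply a) continuous_const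
    · exact isClosed_eq (continuous_finset_sum _ fun a _ => continuous_apply a)
        continuous_const
  refine IsCompact.of_isClosed_subset (isCompact_Icc (a := (0 : M → ℝ)) (b := 1)) hclosed ?_
  intro x hx
  constructor
  · intro a; exact hx.nonneg a
  · intro a; exact hx.le_one a

/-- Existence of an "optimal selector": a distribution on `Γ₁ s` guaranteeing the
value of safety in one step against every pure reply. -/
lemma exists_opt_sel (hG : G.IsGame) {s : S} (hs : s ∈ F) :
    ∃ x : M → ℝ, IsDistOn (G.Γ₁ s) x ∧
      ∀ b ∈ G.Γ₂ s, valSafe G F s ≤ ∑ a, (∑ t, valSafe G F t * G.δ s a b t) * x a := by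
  classical
  have hΓ₂ : (G.Γ₂ s).Nonempty := hG.2.1 s
  set D : Set (M → ℝ) := {x | IsDistOn (G.Γ₁ s) x} with hD
  have hDne : D.Nonempty := ⟨_, isDistOn_unifQ (hG.1 s)⟩
  set φ : (M → ℝ) → ℝ :=
    fun x => (G.Γ₂ s).inf' hΓ₂ fun b => ∑ a, (∑ t, valSafe G F t * G.δ s a b t) * x a with hφdef
  have hφc : Continuous φ := by
    refine continuous_finset_inf' hΓ₂ fun b => ?_
    exact continuous_finset_sum _ fun a _ =>
      (continuous_const.mul (continuous_apply a))
  obtain ⟨xs, hxsD, hmax⟩ := (isCompact_distOn (G.Γ₁ s)).exists_isMaxOn hDne hφc.continuousOn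
  refine ⟨xs, hxsD, ?_⟩
  have hkey : valSafe G F s ≤ φ xs := by
    refine le_of_forall_pos_le_add fun η hη => ?_
    refine valSafe_le hG s fun σ₁ h1 => ?_
    obtain ⟨bm, hbm, hbeq⟩ := Finset.exists_mem_eq_inf' hΓ₂
      (fun b => ∑ a, (∑ t, valSafe G F t * G.δ s a b t) * σ₁ [] s a)
    have hstep := valSafeUnder_le_step (F := F) hG hs h1 hbm (by positivity : (0:ℝ) < η / 2)
    calc valSafeUnder G σ₁ F s
        ≤ ∑ a, (∑ t, valSafe G F t * G.δ s a bm t) * σ₁ [] s a + 2 * (η / 2) := hstep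
      _ = φ (σ₁ [] s) + η := by rw [← hbeq]; ring_nf; rw [hφdef]; ring
      _ ≤ φ xs + η := by
          have hmem : σ₁ [] s ∈ D := h1 [] s
          have h2 : φ (σ₁ [] s) ≤ φ xs := hmax hmem
          linarith
  intro b hb
  refine le_trans hkey ?_
  exact Finset.inf'_le _ hb

end CGame

namespace CGame

variable {S M : Type} [Fintype S] [DecidableEq S] [Fintype M] [DecidableEq M]

/-- perturbation bound: sums against `[0,1]`-valued weights move by at most the `ℓ¹` distance. -/
lemma sum_mul_ge_sub {x q r : M → ℝ} {δ : ℝ} (hr0 : ∀ a, 0 ≤ r a) (hr1 : ∀ a, r a ≤ 1)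
    (hd : ∑ a, |q a - x a| ≤ δ) : ∑ a, r a * x a - δ ≤ ∑ a, r a * q a := by
  have hterm : ∀ a : M, r a * (x a - q a) ≤ |x a - q a| := by
    intro a
    refine le_trans (le_abs_self _) ?_
    rw [abs_mul]
    refine mul_le_of_le_one_left (abs_nonneg _) ?_
    rw [abs_of_nonneg (hr0 a)]
    exact hr1 a
  have hsum := Finset.sum_le_sum fun a (_ : a ∈ Finset.univ) => hterm a
  have habs : ∑ a, |x a - q a| = ∑ a, |q a - x a| :=
    Finset.sum_congr rfl fun a _ => abs_sub_comm _ _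
  have hexp : ∑ a, r a * (x a - q a) = ∑ a, r a * x a - ∑ a, r a * q a := by
    rw [← Finset.sum_sub_distrib]
    exact Finset.sum_congr rfl fun a _ => by ring
  rw [hexp, habs] at hsum
  linarith

/-- rational approximation of a distribution, from below on a sub-support. -/
lemma exists_rat_approx {A : Finset M} {x : M → ℝ} (hx : IsDistOn A x) {δ : ℝ} (hδ : 0 < δ) :
    ∃ q : M → ℚ, IsDistOn A (fun a => ((q a : ℚ) : ℝ)) ∧ (∀ a, x a = 0 → q a = 0) ∧
      ∑ a, |((q a : ℚ) : ℝ) - x a| ≤ δ := by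
  classical
  set n : ℕ := Fintype.card M with hn
  set ρ : ℝ := δ / (2 * (n + 1)) with hρdef
  have hρ : 0 < ρ := by positivity
  -- a point in the support
  have hex : ∃ a, x a ≠ 0 := by
    by_contra hcon
    push_neg at hcon
    have : ∑ a, x a = 0 := Finset.sum_eq_zero fun a _ => hcon a
    rw [hx.sum_one] at this
    norm_num at this
  obtain ⟨a', ha'⟩ := hex
  have ha'pos : 0 < x a' := lt_of_le_of_ne (hx.nonneg a') (Ne.symm ha')
  -- choose rationals below x a
  have hch : ∀ a : M, ∃ qa : ℚ,
      ((x a ≠ 0 ∧ a ≠ a') → (max (x a - ρ) 0 < (qa : ℝ) ∧ (qa : ℝ) < x a)) ∧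
      ((¬(x a ≠ 0 ∧ a ≠ a')) → qa = 0) := by
    intro a
    by_cases h : x a ≠ 0 ∧ a ≠ a'
    · have hxa : 0 < x a := lt_of_le_of_ne (hx.nonneg a) (Ne.symm h.1)
      have hlt : max (x a - ρ) 0 < x a := max_lt (by linarith) hxa
      obtain ⟨qa, h1, h2⟩ := exists_rat_btwn hlt
      exact ⟨qa, fun _ => ⟨h1, h2⟩, fun hcon => absurd h hcon⟩
    · exact ⟨0, fun hcon => absurd hcon h, fun _ => rfl⟩
  choose q0 hq0a hq0b using hch
  -- bounds for a ≠ a'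
  have hb1 : ∀ a, a ≠ a' → 0 ≤ ((q0 a : ℚ) : ℝ) ∧ ((q0 a : ℚ) : ℝ) ≤ x a ∧
      x a - ((q0 a : ℚ) : ℝ) ≤ ρ := by
    intro a ha
    by_cases hxa : x a = 0
    · rw [hq0b a (by tauto)]
      simp [hxa]
      exact le_of_lt hρ
    · obtain ⟨h1, h2⟩ := hq0a a ⟨hxa, ha⟩
      have := le_max_right (x a - ρ) 0
      have := le_max_left (x a - ρ) 0
      exact ⟨by linarith, by linarith, by linarith⟩
  set q : M → ℚ := fun a => if a = a' then 1 - ∑ b ∈ Finset.univ.erase a', q0 b else q0 a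
    with hq
  have hqe : ∀ b, b ∈ Finset.univ.erase a' → q b = q0 b := by
    intro b hb
    rw [hq]
    simp only []
    rw [if_neg (Finset.ne_of_mem_erase hb)]
  have hxerase : ∑ b ∈ Finset.univ.erase a', x b = 1 - x a' := by
    have := Finset.add_sum_erase Finset.univ x (Finset.mem_univ a')
    rw [hx.sum_one] at this
    linarith
  have hqa' : ((q a' : ℚ) : ℝ) = 1 - ∑ b ∈ Finset.univ.erase a', ((q0 b : ℚ) : ℝ) := by
    rw [hq]
    simp only [if_pos rfl]
    push_cast
    ring
  have hsumq0_le : ∑ b ∈ Finset.univ.erase a', ((q0 b : ℚ) : ℝ) ≤ 1 - x a' := by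
    rw [← hxerase]
    exact Finset.sum_le_sum fun b hb => (hb1 b (Finset.ne_of_mem_erase hb)).2.1
  have hsumq0_ge : (1 - x a') - (n : ℝ) * ρ ≤ ∑ b ∈ Finset.univ.erase a', ((q0 b : ℚ) : ℝ) := by
    have h1 : ∑ b ∈ Finset.univ.erase a', (x b - ρ) ≤
        ∑ b ∈ Finset.univ.erase a', ((q0 b : ℚ) : ℝ) :=
      Finset.sum_le_sum fun b hb => by
        have := (hb1 b (Finset.ne_of_mem_erase hb)).2.2; linarith
    have h2 : ∑ b ∈ Finset.univ.erase a', (x b - ρ) =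
        (1 - x a') - (Finset.univ.erase a').card * ρ := by
      rw [Finset.sum_sub_distrib, hxerase, Finset.sum_const, nsmul_eq_mul]
    have h3 : ((Finset.univ.erase a').card : ℝ) ≤ (n : ℝ) := by
      have := Finset.card_erase_le (s := (Finset.univ : Finset M)) (a := a')
      have hcard : (Finset.univ : Finset M).card = n := rfl
      exact_mod_cast le_trans this (le_of_eq hcard)
    nlinarith [hρ]
  have hqa'_ge : x a' ≤ ((q a' : ℚ) : ℝ) := by rw [hqa']; linarith
  have hqa'_le : ((q a' : ℚ) : ℝ) ≤ x a' + (n : ℝ) * ρ := by rw [hqa']; linarith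
  refine ⟨q, ⟨?_, ?_, ?_⟩, ?_, ?_⟩
  · -- nonneg
    intro a
    by_cases ha : a = a'
    · subst ha; linarith
    · rw [hq]; simp only [if_neg ha]
      exact (hb1 a ha).1
  · -- support
    intro a hne
    by_cases ha : a = a'
    · subst ha; exact hx.2.1 _ ha'
    · rw [hq] at hne; simp only [if_neg ha] at hne
      have : q0 a ≠ 0 := by exact_mod_cast hne
      have hxa : x a ≠ 0 := by
        intro hxa0
        exact this (hq0b a (by tauto))
      exact hx.2.1 a hxa
  · -- sum = 1
    have hsplit := Finset.add_sum_erase Finset.univ (fun a => ((q a : ℚ) : ℝ)) (Finset.mem_univ a')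
    have heq : ∑ b ∈ Finset.univ.erase a', ((q b : ℚ) : ℝ) =
        ∑ b ∈ Finset.univ.erase a', ((q0 b : ℚ) : ℝ) :=
      Finset.sum_congr rfl fun b hb => by rw [hqe b hb]
    show ∑ a, ((q a : ℚ) : ℝ) = 1
    rw [← hsplit]
    show ((q a' : ℚ) : ℝ) + ∑ b ∈ Finset.univ.erase a', ((q b : ℚ) : ℝ) = 1
    rw [heq, hqa']
    ring
  · -- zero on zero
    intro a hxa
    by_cases ha : a = a'
    · subst ha; exact absurd hxa ha'
    · rw [hq]; simp only [if_neg ha]; exact hq0b a (by tauto)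
  · -- ℓ¹ bound
    have := Finset.add_sum_erase Finset.univ (fun a => |((q a : ℚ) : ℝ) - x a|)
      (Finset.mem_univ a')
    rw [← this]
    have hterm1 : |((q a' : ℚ) : ℝ) - x a'| ≤ (n : ℝ) * ρ := by
      rw [abs_of_nonneg (by linarith)]
      linarith
    have hterm2 : ∑ b ∈ Finset.univ.erase a', |((q b : ℚ) : ℝ) - x b| ≤ (n : ℝ) * ρ := by
      calc ∑ b ∈ Finset.univ.erase a', |((q b : ℚ) : ℝ) - x b|
          ≤ ∑ _b ∈ Finset.univ.erase a', ρ := by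
            refine Finset.sum_le_sum fun b hb => ?_
            rw [hqe b hb]
            have h := hb1 b (Finset.ne_of_mem_erase hb)
            rw [abs_of_nonpos (by linarith)]
            linarith
        _ = (Finset.univ.erase a').card * ρ := by rw [Finset.sum_const, nsmul_eq_mul]
        _ ≤ (n : ℝ) * ρ := by
            have h3 : ((Finset.univ.erase a').card : ℝ) ≤ (n : ℝ) := by
              have := Finset.card_erase_le (s := (Finset.univ : Finset M)) (a := a')
              exact_mod_cast this
            nlinarith [hρ]
    have hρval : ρ * (2 * ((n:ℝ) + 1)) = δ := by
      rw [hρdef]; field_simp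
    have hfin : (n:ℝ) * ρ + (n:ℝ) * ρ ≤ δ := by nlinarith [hρval, hρ]
    show |((q a' : ℚ) : ℝ) - x a'| +
        ∑ b ∈ Finset.univ.erase a', |((q b : ℚ) : ℝ) - x b| ≤ δ
    linarith

end CGame

namespace CGame

variable {S M : Type} [Fintype S] [DecidableEq S] [Fintype M] [DecidableEq M]
variable {G : CGame S M}

/-- The perturbed value vector used as subfixpoint certificate. -/
noncomputable def vv (G : CGame S M) (F : Set S) (ε' : ℝ) : S → ℝ :=
  fun t => max (valSafe G F t - ε' * (valSafe G F t * (1 - valSafe G F t))) 0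

lemma vv_nonneg (F : Set S) (ε' : ℝ) (t : S) : 0 ≤ vv G F ε' t := le_max_right _ _

lemma vv_ge (F : Set S) (ε' : ℝ) (t : S) :
    valSafe G F t - ε' * (valSafe G F t * (1 - valSafe G F t)) ≤ vv G F ε' t := le_max_left _ _

lemma vv_le_one (hG : G.IsGame) (F : Set S) {ε' : ℝ} (hε : 0 ≤ ε') (t : S) :
    vv G F ε' t ≤ 1 := by
  have h0 := valSafe_nonneg (F := F) hG t
  have h1 := valSafe_le_one (F := F) hG t
  refine max_le ?_ (by norm_num)
  nlinarith [mul_nonneg hε (mul_nonneg h0 (by linarith : (0:ℝ) ≤ 1 - valSafe G F t))]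

lemma vv_off (hG : G.IsGame) {F : Set S} {ε' : ℝ} {t : S} (ht : t ∉ F) : vv G F ε' t = 0 := by
  unfold vv
  rw [valSafe_off hG ht]
  simp

/-- The per-state construction of a good rational selector. -/
lemma exists_sel_at (hG : G.IsGame) {F : Set S} {s : S} (hs : s ∈ F) {ε' : ℝ}
    (hε0 : 0 < ε') (hε1 : ε' ≤ 1/2) :
    ∃ q : M → ℚ, IsDistOn (G.Γ₁ s) (fun a => ((q a : ℚ) : ℝ)) ∧
      ∀ b ∈ G.Γ₂ s, vv G F ε' s ≤ ∑ a, (∑ t, vv G F ε' t * G.δ s a b t) * ((q a : ℚ) : ℝ) := by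
  classical
  set v : S → ℝ := valSafe G F with hvdef
  set c : ℝ := v s with hcdef
  have hv0 : ∀ t, 0 ≤ v t := fun t => valSafe_nonneg hG t
  have hv1 : ∀ t, v t ≤ 1 := fun t => valSafe_le_one hG t
  have hc0 : 0 ≤ c := hv0 s
  have hc1 : c ≤ 1 := hv1 s
  have hδ0 : ∀ a b t, 0 ≤ G.δ s a b t := fun a b t => hG.2.2.1 s a b t
  have hδ1 : ∀ a b, ∑ t, G.δ s a b t = 1 := fun a b => hG.2.2.2 s a b
  obtain ⟨xs, hxs, hopt⟩ := exists_opt_sel hG hs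
  set row : M → M → ℝ := fun b a => ∑ t, v t * G.δ s a b t with hrowdef
  set row2 : M → M → ℝ := fun b a => ∑ t, (v t - c)^2 * G.δ s a b t with hrow2def
  set cval : M → ℝ := fun b => ∑ a, row b a * xs a with hcvaldef
  set Pstar : M → ℝ := fun b => ∑ a, row2 b a * xs a with hPstardef
  have hrow0 : ∀ b a, 0 ≤ row b a := fun b a =>
    Finset.sum_nonneg fun t _ => mul_nonneg (hv0 t) (hδ0 a b t)
  have hrow1 : ∀ b a, row b a ≤ 1 := by
    intro b a
    calc row b a ≤ ∑ t, G.δ s a b t := by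
          refine Finset.sum_le_sum fun t _ => ?_
          calc v t * G.δ s a b t ≤ 1 * G.δ s a b t :=
                mul_le_mul_of_nonneg_right (hv1 t) (hδ0 a b t)
            _ = G.δ s a b t := one_mul _
      _ = 1 := hδ1 a b
  have hrow20 : ∀ b a, 0 ≤ row2 b a := fun b a =>
    Finset.sum_nonneg fun t _ => mul_nonneg (sq_nonneg _) (hδ0 a b t)
  have hrow21 : ∀ b a, row2 b a ≤ 1 := by
    intro b a
    calc row2 b a ≤ ∑ t, G.δ s a b t := by
          refine Finset.sum_le_sum fun t _ => ?_
          have hsq : (v t - c)^2 ≤ 1 := by nlinarith [hv0 t, hv1 t]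
          calc (v t - c)^2 * G.δ s a b t ≤ 1 * G.δ s a b t :=
                mul_le_mul_of_nonneg_right hsq (hδ0 a b t)
            _ = G.δ s a b t := one_mul _
      _ = 1 := hδ1 a b
  have hPstar0 : ∀ b, 0 ≤ Pstar b :=
    fun b => Finset.sum_nonneg fun a _ => mul_nonneg (hrow20 b a) (hxs.nonneg a)
  have hcb : ∀ b ∈ G.Γ₂ s, c ≤ cval b := fun b hb => hopt b hb
  set Pos : Finset M := (G.Γ₂ s).filter (fun b => c < cval b ∨ 0 < Pstar b) with hPosdef
  set θ : ℝ := if h : Pos.Nonempty then Pos.inf' h (fun b => max (cval b - c) (Pstar b)) else 1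
    with hθdef
  have hθpos : 0 < θ := by
    rw [hθdef]
    split
    case isTrue h =>
      rw [Finset.lt_inf'_iff]
      intro b hbP
      have := Finset.mem_filter.mp hbP
      rcases this.2 with h1 | h1
      · exact lt_max_of_lt_left (by linarith)
      · exact lt_max_of_lt_right h1
    case isFalse h => norm_num
  set δs : ℝ := ε' * θ / 2 with hδsdef
  have hδspos : 0 < δs := by rw [hδsdef]; positivity
  obtain ⟨q, hq, hq0, hqd⟩ := exists_rat_approx hxs hδspos
  refine ⟨q, hq, ?_⟩
  intro b hb
  -- abbreviations
  set e : ℝ := ∑ a, row b a * ((q a : ℚ) : ℝ) with hedef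
  set P : ℝ := ∑ a, row2 b a * ((q a : ℚ) : ℝ) with hPdef
  set W : ℝ := ∑ a, (∑ t, (v t * (1 - v t)) * G.δ s a b t) * ((q a : ℚ) : ℝ) with hWdef
  set T : ℝ := ∑ a, (∑ t, vv G F ε' t * G.δ s a b t) * ((q a : ℚ) : ℝ) with hTdef
  have he : cval b - δs ≤ e := sum_mul_ge_sub (hrow0 b) (hrow1 b) hqd
  have hP : Pstar b - δs ≤ P := sum_mul_ge_sub (hrow20 b) (hrow21 b) hqd
  have hP0 : 0 ≤ P :=
    Finset.sum_nonneg fun a _ => mul_nonneg (hrow20 b a) (hq.nonneg a)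
  -- step 1 : e - ε' * W ≤ T
  have hstep1 : e - ε' * W ≤ T := by
    have hper : ∀ a : M,
        row b a - ε' * (∑ t, (v t * (1 - v t)) * G.δ s a b t) ≤
          ∑ t, vv G F ε' t * G.δ s a b t := by
      intro a
      have h1 : ∑ t, (v t - ε' * (v t * (1 - v t))) * G.δ s a b t ≤
          ∑ t, vv G F ε' t * G.δ s a b t :=
        Finset.sum_le_sum fun t _ =>
          mul_le_mul_of_nonneg_right (vv_ge F ε' t) (hδ0 a b t)
      have h2 : ∑ t, (v t - ε' * (v t * (1 - v t))) * G.δ s a b t =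
          row b a - ε' * (∑ t, (v t * (1 - v t)) * G.δ s a b t) := by
        rw [hrowdef]
        simp only []
        rw [Finset.mul_sum, ← Finset.sum_sub_distrib]
        exact Finset.sum_congr rfl fun t _ => by ring
      linarith
    calc e - ε' * W = ∑ a, (row b a - ε' * (∑ t, (v t * (1 - v t)) * G.δ s a b t)) *
          ((q a : ℚ) : ℝ) := by
          rw [hedef, hWdef, Finset.mul_sum, ← Finset.sum_sub_distrib]
          exact Finset.sum_congr rfl fun a _ => by ring
      _ ≤ T := by
          rw [hTdef]
          exact Finset.sum_le_sum fun a _ =>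
            mul_le_mul_of_nonneg_right (hper a) (hq.nonneg a)
  -- the sum of transition masses is 1
  have hU3 : ∑ a, (∑ t, G.δ s a b t) * ((q a : ℚ) : ℝ) = 1 := by
    have : ∀ a : M, (∑ t, G.δ s a b t) * ((q a : ℚ) : ℝ) = ((q a : ℚ) : ℝ) := by
      intro a; rw [hδ1 a b, one_mul]
    simp only [this]
    exact hq.sum_one
  -- key algebraic identity
  have hkey : (e - c) + ε' * (c * (1 - c) - W) =
      (e - c) * (1 + ε' * (2 * c - 1)) + ε' * P := by
    have hA : W = e - (∑ a, (∑ t, (v t * v t) * G.δ s a b t) * ((q a : ℚ) : ℝ)) := by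
      show (∑ a, (∑ t, (v t * (1 - v t)) * G.δ s a b t) * ((q a : ℚ) : ℝ))
          = (∑ a, (∑ t, v t * G.δ s a b t) * ((q a : ℚ) : ℝ))
            - ∑ a, (∑ t, (v t * v t) * G.δ s a b t) * ((q a : ℚ) : ℝ)
      rw [← Finset.sum_sub_distrib]
      refine Finset.sum_congr rfl fun a _ => ?_
      have hinner : (∑ t, (v t * (1 - v t)) * G.δ s a b t)
          = (∑ t, v t * G.δ s a b t) - ∑ t, (v t * v t) * G.δ s a b t := by
        rw [← Finset.sum_sub_distrib]
        exact Finset.sum_congr rfl fun t _ => by ring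
      rw [hinner, sub_mul]
    have hB : P = (∑ a, (∑ t, (v t * v t) * G.δ s a b t) * ((q a : ℚ) : ℝ))
        - 2 * c * e + c ^ 2 * (∑ a, (∑ t, G.δ s a b t) * ((q a : ℚ) : ℝ)) := by
      have hpera : ∀ a : M, (∑ t, (v t - c)^2 * G.δ s a b t) * ((q a : ℚ) : ℝ)
          = (∑ t, (v t * v t) * G.δ s a b t) * ((q a : ℚ) : ℝ)
            - 2 * c * ((∑ t, v t * G.δ s a b t) * ((q a : ℚ) : ℝ))
            + c ^ 2 * ((∑ t, G.δ s a b t) * ((q a : ℚ) : ℝ)) := by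
        intro a
        have hinner : (∑ t, (v t - c)^2 * G.δ s a b t)
            = (∑ t, (v t * v t) * G.δ s a b t) - 2 * c * (∑ t, v t * G.δ s a b t)
              + c ^ 2 * (∑ t, G.δ s a b t) := by
          rw [Finset.mul_sum, Finset.mul_sum, ← Finset.sum_sub_distrib,
            ← Finset.sum_add_distrib]
          exact Finset.sum_congr rfl fun t _ => by ring
        rw [hinner]; ring
      show (∑ a, (∑ t, (v t - c)^2 * G.δ s a b t) * ((q a : ℚ) : ℝ)) = _
      calc (∑ a, (∑ t, (v t - c)^2 * G.δ s a b t) * ((q a : ℚ) : ℝ))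
          = ∑ a, ((∑ t, (v t * v t) * G.δ s a b t) * ((q a : ℚ) : ℝ)
            - 2 * c * ((∑ t, v t * G.δ s a b t) * ((q a : ℚ) : ℝ))
            + c ^ 2 * ((∑ t, G.δ s a b t) * ((q a : ℚ) : ℝ))) :=
            Finset.sum_congr rfl fun a _ => hpera a
        _ = _ := by
            rw [Finset.sum_add_distrib, Finset.sum_sub_distrib, ← Finset.mul_sum,
              ← Finset.mul_sum]
    have hP' : P = (∑ a, (∑ t, (v t * v t) * G.δ s a b t) * ((q a : ℚ) : ℝ))
        - 2 * c * e + c ^ 2 := by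
      rw [hB, hU3, mul_one]
    rw [hA, hP']
    ring
  -- final case analysis
  have hgoal0 : 0 ≤ (e - c) + ε' * (c * (1 - c) - W) := by
    rw [hkey]
    by_cases hec : c ≤ e
    · have hκ : 0 ≤ 1 + ε' * (2 * c - 1) := by nlinarith
      nlinarith
    · push_neg at hec
      by_cases hbPos : b ∈ Pos
      · have hPosne : Pos.Nonempty := ⟨b, hbPos⟩
        have hθeq : θ = Pos.inf' hPosne (fun b => max (cval b - c) (Pstar b)) := by
          rw [hθdef, dif_pos hPosne]
        have hθle : θ ≤ max (cval b - c) (Pstar b) := by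
          rw [hθeq]; exact Finset.inf'_le _ hbPos
        rcases le_max_iff.mp hθle with hcase | hcase
        · exfalso
          have : c + θ - δs ≤ e := by linarith [he, hcase]
          nlinarith [hθpos, hδspos]
        · -- P is bounded below by θ - δs
          have hPlb : θ - δs ≤ P := by linarith [hP, hcase]
          have hz : e - c ≥ -δs := by linarith [he, hcb b hb]
          have hκub : 1 + ε' * (2 * c - 1) ≤ 3/2 := by nlinarith
          have hκlb : (1:ℝ)/2 ≤ 1 + ε' * (2 * c - 1) := by nlinarith
          have hmul : (e - c) * (1 + ε' * (2 * c - 1)) ≥ (-δs) * (3/2) := by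
            have h1 : (e - c) * (1 + ε' * (2 * c - 1)) ≥ (e - c) * (3/2) := by
              nlinarith
            nlinarith
          nlinarith [hδspos, hθpos]
      · exfalso
        -- b is not in Pos: then cval b = c and Pstar b = 0, forcing e = c
        have hnot : ¬(c < cval b ∨ 0 < Pstar b) := by
          intro hcon
          exact hbPos (Finset.mem_filter.mpr ⟨hb, hcon⟩)
        push_neg at hnot
        have hcveq : cval b = c := le_antisymm hnot.1 (hcb b hb)
        have hPs0 : Pstar b = 0 := le_antisymm hnot.2 (hPstar0 b)
        have hzero : ∀ a ∈ Finset.univ, row2 b a * xs a = 0 :=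
          (Finset.sum_eq_zero_iff_of_nonneg fun a _ =>
            mul_nonneg (hrow20 b a) (hxs.nonneg a)).mp hPs0
        have hrowc : ∀ a : M, ((q a : ℚ) : ℝ) ≠ 0 → row b a = c := by
          intro a hqa
          have hxa : xs a ≠ 0 := by
            intro h0
            exact hqa (by rw [hq0 a h0]; norm_num)
          have hr2 : row2 b a = 0 := by
            rcases mul_eq_zero.mp (hzero a (Finset.mem_univ a)) with h | h
            · exact h
            · exact absurd h hxa
          have hterm : ∀ t ∈ Finset.univ, (v t - c)^2 * G.δ s a b t = 0 :=
            (Finset.sum_eq_zero_iff_of_nonneg fun t _ =>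
              mul_nonneg (sq_nonneg _) (hδ0 a b t)).mp hr2
          have hvt : ∀ t : S, v t * G.δ s a b t = c * G.δ s a b t := by
            intro t
            rcases mul_eq_zero.mp (hterm t (Finset.mem_univ t)) with h | h
            · have : v t = c := by
                have := sq_eq_zero_iff.mp h
                linarith [sub_eq_zero.mp this]
              rw [this]
            · rw [h, mul_zero, mul_zero]
          calc row b a = ∑ t, c * G.δ s a b t := Finset.sum_congr rfl fun t _ => hvt t
            _ = c := by rw [← Finset.mul_sum, hδ1 a b, mul_one]
        have hec2 : e = c := by
          calc e = ∑ a, c * ((q a : ℚ) : ℝ) := by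
                refine Finset.sum_congr rfl fun a _ => ?_
                rcases eq_or_ne ((q a : ℚ) : ℝ) 0 with h | h
                · rw [h, mul_zero, mul_zero]
                · rw [hrowc a h]
            _ = c := by rw [← Finset.mul_sum, hq.sum_one, mul_one]
        linarith
  -- conclude
  by_cases hvs : c - ε' * (c * (1 - c)) ≤ 0
  · have : vv G F ε' s = 0 := max_eq_right hvs
    rw [this]
    rw [hTdef] at *
    exact Finset.sum_nonneg fun a _ => mul_nonneg
      (Finset.sum_nonneg fun t _ => mul_nonneg (vv_nonneg F ε' t) (hδ0 a b t)) (hq.nonneg a)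
  · push_neg at hvs
    have hvve : vv G F ε' s = c - ε' * (c * (1 - c)) := max_eq_left (le_of_lt hvs)
    rw [hvve]
    linarith [hstep1, hgoal0]

end CGame

/-- **k-uniform memoryless ε-optimal strategies for concurrent safety games.**
For every concurrent game structure `G` with safe set `F` and every `ε > 0`,
there exist `k > 0` and a `k`-uniform player-1 selector `ξ` whose induced
memoryless strategy is ε-optimal for `Safe F`: for every state `s`,
`inf_{σ₂} Pr_s^{ml ξ, σ₂}(Safe F) ≥ ⟨1⟩val(Safe F)(s) − ε`. -/
theorem k_uniform_eps_optimal_safe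
    {S M : Type} [Fintype S] [DecidableEq S] [Fintype M] [DecidableEq M]
    (G : CGame S M) (hG : G.IsGame) (F : Set S) (ε : ℝ) (hε : 0 < ε) :
    ∃ k : ℕ, 0 < k ∧ ∃ ξ : S → M → ℝ, CGame.IsSel1 G ξ ∧ CGame.KUniform k ξ ∧
      ∀ s : S, CGame.valSafe G F s - ε ≤ CGame.valSafeUnder G (CGame.ml ξ) F s := by
  classical
  set ε' : ℝ := min ε (1/2) with hε'def
  have hε'0 : 0 < ε' := lt_min hε (by norm_num)
  have hε'1 : ε' ≤ 1/2 := min_le_right _ _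
  have hε'ε : ε' ≤ ε := min_le_left _ _
  -- per-state rational selectors
  have hsel : ∀ s : S, ∃ q : M → ℚ, CGame.IsDistOn (G.Γ₁ s) (fun a => ((q a : ℚ) : ℝ)) ∧
      (s ∈ F → ∀ b ∈ G.Γ₂ s, CGame.vv G F ε' s ≤
        ∑ a, (∑ t, CGame.vv G F ε' t * G.δ s a b t) * ((q a : ℚ) : ℝ)) := by
    intro s
    by_cases hs : s ∈ F
    · obtain ⟨q, hq1, hq2⟩ := CGame.exists_sel_at hG hs hε'0 hε'1
      exact ⟨q, hq1, fun _ => hq2⟩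
    · exact ⟨CGame.unifQ (G.Γ₁ s), CGame.isDistOn_unifQ (hG.1 s), fun h => absurd h hs⟩
  choose ξq hξq1 hξq2 using hsel
  set ξ : S → M → ℝ := fun s a => ((ξq s a : ℚ) : ℝ) with hξdef
  have hsel1 : CGame.IsSel1 G ξ := fun s => hξq1 s
  set k : ℕ := 1 + Finset.univ.sup (fun s : S => Finset.univ.sup fun a : M => (ξq s a).den)
    with hk
  refine ⟨k, by omega, ξ, hsel1, ?_, ?_⟩
  · -- k-uniformity
    intro s a
    have hq0' : (0 : ℝ) ≤ ((ξq s a : ℚ) : ℝ) := (hξq1 s).nonneg a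
    have hq1' : ((ξq s a : ℚ) : ℝ) ≤ 1 := (hξq1 s).le_one a
    have hr0 : 0 ≤ ξq s a := by exact_mod_cast hq0'
    have hr1 : ξq s a ≤ 1 := by exact_mod_cast hq1'
    refine ⟨(ξq s a).num.toNat, (ξq s a).den, ?_, ?_, ?_⟩
    · have hden : (0:ℚ) < ((ξq s a).den : ℚ) := by exact_mod_cast (ξq s a).pos
      have hdiv : (((ξq s a).num : ℤ) : ℚ) / ((ξq s a).den : ℚ) ≤ 1 := by
        rw [Rat.num_div_den]
        exact hr1
      have hle : (((ξq s a).num : ℤ) : ℚ) ≤ ((ξq s a).den : ℚ) := (div_le_one hden).mp hdiv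
      have hle2 : (ξq s a).num ≤ ((ξq s a).den : ℤ) := by exact_mod_cast hle
      exact Int.toNat_le.mpr hle2
    · have h1 : (ξq s a).den ≤ Finset.univ.sup fun a : M => (ξq s a).den :=
        Finset.le_sup (f := fun a : M => (ξq s a).den) (Finset.mem_univ a)
      have h2 : (Finset.univ.sup fun a : M => (ξq s a).den) ≤
          Finset.univ.sup (fun s : S => Finset.univ.sup fun a : M => (ξq s a).den) :=
        Finset.le_sup (f := fun s : S => Finset.univ.sup fun a : M => (ξq s a).den)
          (Finset.mem_univ s)
      omega
    · show ((ξq s a : ℚ) : ℝ) = _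
      rw [Rat.cast_def]
      have hnum : (((ξq s a).num.toNat : ℕ) : ℝ) = (((ξq s a).num : ℤ) : ℝ) := by
        have := Int.toNat_of_nonneg (Rat.num_nonneg.mpr hr0)
        exact_mod_cast congrArg (fun z : ℤ => (z : ℝ)) this
      rw [← hnum]
  · -- ε-optimality
    intro s
    have happ := CGame.le_valSafeUnder_of_subfix (F := F) hG hsel1
      (v := CGame.vv G F ε')
      (fun t => CGame.vv_le_one hG F hε'0.le t)
      (fun t ht => CGame.vv_off hG ht)
      (fun u hu b hb => hξq2 u hu b hb) s
    have h1 : CGame.valSafe G F s - ε ≤ CGame.vv G F ε' s := by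
      have hge := CGame.vv_ge (G := G) F ε' s
      have h0 := CGame.valSafe_nonneg (F := F) hG s
      have hle1 := CGame.valSafe_le_one (F := F) hG s
      have hw1 : CGame.valSafe G F s * (1 - CGame.valSafe G F s) ≤ 1 := by nlinarith
      have hw0 : 0 ≤ CGame.valSafe G F s * (1 - CGame.valSafe G F s) := by nlinarith
      have : ε' * (CGame.valSafe G F s * (1 - CGame.valSafe G F s)) ≤ ε' * 1 :=
        mul_le_mul_of_nonneg_left hw1 hε'0.le
      linarith
    linarith
end

section
/- For a concurrent game structure G with safe set F ⊆ S, for each integer k ≥ |Moves| define z^k(s) = max over k-uniform memoryless player-1 strategies σ₁ of inf_{σ₂} Pr_s^{σ₁,σ₂}(Safe(F)) (the maximum is attained since there are finitely many k-uniform selectors). Then for all k, z^k(s) ≤ z^{k+1}(s) for every state s, and lim_{k→∞} z^k(s) = ⟨1⟩val(Safe(F))(s) for every state s. -/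
open scoped Classical

/-- The best value guaranteed at `s` by a `k`-uniform memoryless player-1
strategy for the safety objective `Safe F` (the supremum is attained since there
are only finitely many `k`-uniform selectors). -/
noncomputable def CGame.zk {S M : Type} [Fintype S] [DecidableEq S]
    [Fintype M] [DecidableEq M] (G : CGame S M) (F : Set S) (k : ℕ) (s : S) : ℝ :=
  sSup {x | ∃ ξ : S → M → ℝ, CGame.IsSel1 G ξ ∧ CGame.KUniform k ξ ∧
    x = CGame.valSafeUnder G (CGame.ml ξ) F s}


set_option linter.unusedSectionVars false
set_option linter.unusedVariables false
set_option maxHeartbeats 1000000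

namespace CGame

variable {S M : Type} [Fintype S] [DecidableEq S] [Fintype M] [DecidableEq M]

namespace Aux

open Finset

variable (G : CGame S M)

/-- one-step payoff of vector `v` at `(s,a,b)`. -/
noncomputable def pay (v : S → ℝ) (s : S) (a b : M) : ℝ := ∑ t, G.δ s a b t * v t

variable {G}

lemma pay_nonneg (hG : G.IsGame) {v : S → ℝ} (hv : ∀ t, 0 ≤ v t) (s : S) (a b : M) :
    0 ≤ pay G v s a b :=
  Finset.sum_nonneg fun t _ => mul_nonneg (hG.2.2.1 s a b t) (hv t)

lemma pay_le_one (hG : G.IsGame) {v : S → ℝ} (hv : ∀ t, v t ≤ 1) (s : S) (a b : M) :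
    pay G v s a b ≤ 1 := by
  calc pay G v s a b ≤ ∑ t, G.δ s a b t := by
        apply Finset.sum_le_sum
        intro t _
        calc G.δ s a b t * v t ≤ G.δ s a b t * 1 :=
              mul_le_mul_of_nonneg_left (hv t) (hG.2.2.1 s a b t)
          _ = G.δ s a b t := mul_one _
    _ = 1 := hG.2.2.2 s a b

lemma pay_translate (hG : G.IsGame) {v w : S → ℝ} {c : ℝ} (h : ∀ t, v t ≤ w t + c)
    (s : S) (a b : M) : pay G v s a b ≤ pay G w s a b + c := by
  have h1 : pay G v s a b ≤ ∑ t, G.δ s a b t * (w t + c) :=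
    Finset.sum_le_sum fun t _ => mul_le_mul_of_nonneg_left (h t) (hG.2.2.1 s a b t)
  have h2 : ∑ t, G.δ s a b t * (w t + c) = pay G w s a b + c := by
    have : ∀ t : S, G.δ s a b t * (w t + c) = G.δ s a b t * w t + c * G.δ s a b t := by
      intro t; ring
    rw [Finset.sum_congr rfl fun t _ => this t, Finset.sum_add_distrib, ← Finset.mul_sum,
      hG.2.2.2 s a b, mul_one]
    rfl
  linarith

/-- the value for player 1 of the one-shot game at `s` with selector `x`,
when player 2 best-responds with a pure move. -/
noncomputable def minb (hG : G.IsGame) (v : S → ℝ) (s : S) (x : M → ℝ) : ℝ :=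
  (G.Γ₂ s).inf' (hG.2.1 s) (fun b => ∑ a, x a * pay G v s a b)

lemma minb_le (hG : G.IsGame) (v : S → ℝ) (s : S) (x : M → ℝ) {b : M} (hb : b ∈ G.Γ₂ s) :
    minb hG v s x ≤ ∑ a, x a * pay G v s a b :=
  Finset.inf'_le _ hb

lemma le_minb (hG : G.IsGame) (v : S → ℝ) (s : S) (x : M → ℝ) {c : ℝ}
    (h : ∀ b ∈ G.Γ₂ s, c ≤ ∑ a, x a * pay G v s a b) : c ≤ minb hG v s x :=
  Finset.le_inf' _ _ h

lemma minb_nonneg (hG : G.IsGame) {v : S → ℝ} (hv : ∀ t, 0 ≤ v t) (s : S)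
    {x : M → ℝ} (hx : ∀ a, 0 ≤ x a) : 0 ≤ minb hG v s x :=
  le_minb hG v s x fun b _ => Finset.sum_nonneg fun a _ =>
    mul_nonneg (hx a) (pay_nonneg hG hv s a b)

lemma sum_mul_pay_le_one (hG : G.IsGame) {v : S → ℝ} (hv : ∀ t, v t ≤ 1) (s : S)
    {x : M → ℝ} (hx0 : ∀ a, 0 ≤ x a) (hx1 : ∑ a, x a = 1) (b : M) :
    ∑ a, x a * pay G v s a b ≤ 1 := by
  calc ∑ a, x a * pay G v s a b ≤ ∑ a, x a * 1 :=
        Finset.sum_le_sum fun a _ => mul_le_mul_of_nonneg_left (pay_le_one hG hv s a b) (hx0 a)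
    _ = 1 := by simp [hx1]

lemma minb_le_one (hG : G.IsGame) {v : S → ℝ} (hv : ∀ t, v t ≤ 1) (s : S)
    {x : M → ℝ} (hx0 : ∀ a, 0 ≤ x a) (hx1 : ∑ a, x a = 1) :
    minb hG v s x ≤ 1 := by
  obtain ⟨b, hb, hEq⟩ := Finset.exists_mem_eq_inf' (hG.2.1 s)
    (fun b => ∑ a, x a * pay G v s a b)
  rw [minb, hEq]
  exact sum_mul_pay_le_one hG hv s hx0 hx1 b

lemma minb_translate (hG : G.IsGame) {v w : S → ℝ} {c : ℝ} (hc : 0 ≤ c)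
    (h : ∀ t, v t ≤ w t + c) (s : S) {x : M → ℝ} (hx0 : ∀ a, 0 ≤ x a)
    (hx1 : ∑ a, x a = 1) : minb hG v s x ≤ minb hG w s x + c := by
  obtain ⟨b, hb, hEq⟩ := Finset.exists_mem_eq_inf' (hG.2.1 s)
    (fun b => ∑ a, x a * pay G w s a b)
  have h1 : minb hG v s x ≤ ∑ a, x a * pay G v s a b := minb_le hG v s x hb
  have h2 : ∑ a, x a * pay G v s a b ≤ (∑ a, x a * pay G w s a b) + c := by
    have : ∑ a, x a * pay G v s a b ≤ ∑ a, x a * (pay G w s a b + c) :=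
      Finset.sum_le_sum fun a _ =>
        mul_le_mul_of_nonneg_left (pay_translate hG h s a b) (hx0 a)
    have e : ∑ a, x a * (pay G w s a b + c) = (∑ a, x a * pay G w s a b) + c := by
      rw [Finset.sum_congr rfl (fun a _ => by ring :
        ∀ a ∈ Finset.univ, x a * (pay G w s a b + c) = x a * pay G w s a b + c * x a),
        Finset.sum_add_distrib, ← Finset.mul_sum, hx1, mul_one]
    linarith
  have : minb hG w s x = ∑ a, x a * pay G w s a b := hEq
  linarith

/-- The set of distributions on `A`. -/
def distSet (A : Finset M) : Set (M → ℝ) := {x | IsDistOn A x}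

lemma uniform_mem_distSet {A : Finset M} (hA : A.Nonempty) :
    (fun a => if a ∈ A then (1 : ℝ) / A.card else 0) ∈ distSet A := by
  have hc : (0 : ℝ) < A.card := by
    exact_mod_cast Finset.card_pos.2 hA
  refine ⟨fun a => ?_, fun a ha => ?_, ?_⟩
  · by_cases h : a ∈ A <;> simp [h] <;> positivity
  · by_cases h : a ∈ A
    · exact h
    · simp [h] at ha
  · rw [Finset.sum_ite_mem, Finset.univ_inter, Finset.sum_const, nsmul_eq_mul]
    field_simp

lemma distSet_nonempty {A : Finset M} (hA : A.Nonempty) : (distSet A).Nonempty :=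
  ⟨_, uniform_mem_distSet hA⟩

/-- the one-step sup-inf operator. -/
noncomputable def preB (hG : G.IsGame) (v : S → ℝ) (s : S) : ℝ :=
  sSup ((fun x => minb hG v s x) '' distSet (G.Γ₁ s))

lemma preB_bddAbove (hG : G.IsGame) {v : S → ℝ} (hv1 : ∀ t, v t ≤ 1) (s : S) :
    BddAbove ((fun x => minb hG v s x) '' distSet (G.Γ₁ s)) := by
  refine ⟨1, fun r hr => ?_⟩
  obtain ⟨x, hx, rfl⟩ := hr
  exact minb_le_one hG hv1 s hx.1 hx.2.2

lemma minb_le_preB (hG : G.IsGame) {v : S → ℝ} (hv1 : ∀ t, v t ≤ 1) (s : S)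
    {x : M → ℝ} (hx : IsDistOn (G.Γ₁ s) x) : minb hG v s x ≤ preB hG v s :=
  le_csSup (preB_bddAbove hG hv1 s) ⟨x, hx, rfl⟩

lemma preB_nonneg (hG : G.IsGame) {v : S → ℝ} (hv : ∀ t, 0 ≤ v t) (hv1 : ∀ t, v t ≤ 1)
    (s : S) : 0 ≤ preB hG v s := by
  have hmem := uniform_mem_distSet (hG.1 s)
  exact le_trans (minb_nonneg hG hv s hmem.1) (minb_le_preB hG hv1 s hmem)

lemma preB_le_one (hG : G.IsGame) {v : S → ℝ} (hv1 : ∀ t, v t ≤ 1) (s : S) :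
    preB hG v s ≤ 1 := by
  apply Real.sSup_le _ zero_le_one
  rintro r ⟨x, hx, rfl⟩
  exact minb_le_one hG hv1 s hx.1 hx.2.2

lemma preB_translate (hG : G.IsGame) {v w : S → ℝ} {c : ℝ} (hc : 0 ≤ c)
    (hw0 : ∀ t, 0 ≤ w t) (hw1 : ∀ t, w t ≤ 1) (h : ∀ t, v t ≤ w t + c) (s : S) :
    preB hG v s ≤ preB hG w s + c := by
  apply Real.sSup_le
  · rintro r ⟨x, hx, rfl⟩
    have := minb_translate hG hc h s hx.1 hx.2.2
    have h2 := minb_le_preB hG hw1 s hx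
    linarith
  · have := preB_nonneg hG hw0 hw1 s
    linarith

lemma distSet_compact (A : Finset M) : IsCompact (distSet (M := M) A) := by
  have hsub : distSet (M := M) A ⊆ Set.pi Set.univ (fun _ : M => Set.Icc (0:ℝ) 1) := by
    intro x hx a _
    refine ⟨hx.1 a, ?_⟩
    have := hx.2.2
    have h1 : x a ≤ ∑ b, x b := Finset.single_le_sum (fun b _ => hx.1 b) (Finset.mem_univ a)
    rw [this] at h1
    exact h1
  have hclosed : IsClosed (distSet (M := M) A) := by
    have h1 : distSet (M := M) A =
        (⋂ a : M, {x : M → ℝ | 0 ≤ x a}) ∩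
        ((⋂ a ∈ (Finset.univ \ A : Finset M), {x : M → ℝ | x a = 0}) ∩
         {x : M → ℝ | ∑ a, x a = 1}) := by
      ext x
      constructor
      · intro hx
        refine ⟨Set.mem_iInter.2 fun a => hx.1 a, ?_, hx.2.2⟩
        refine Set.mem_iInter.2 fun a => Set.mem_iInter.2 fun ha => ?_
        by_contra h
        exact (Finset.mem_sdiff.1 ha).2 (hx.2.1 a h)
      · rintro ⟨h1, h2, h3⟩
        refine ⟨fun a => Set.mem_iInter.1 h1 a, fun a ha => ?_, h3⟩
        by_contra h
        exact ha (Set.mem_iInter.1 (Set.mem_iInter.1 h2 a) (Finset.mem_sdiff.2 ⟨Finset.mem_univ a, h⟩))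
    rw [h1]
    apply IsClosed.inter
    · exact isClosed_iInter fun a => isClosed_le continuous_const (continuous_apply a)
    apply IsClosed.inter
    · exact isClosed_iInter fun a => isClosed_iInter fun _ =>
        isClosed_eq (continuous_apply a) continuous_const
    · exact isClosed_eq (continuous_finset_sum _ fun a _ => continuous_apply a) continuous_const
  exact (isCompact_univ_pi fun _ => isCompact_Icc).of_isClosed_subset hclosed hsub

lemma inf'_continuous {α β : Type} [Fintype β] [TopologicalSpace α]
    {A : Finset β} (hA : A.Nonempty) (f : β → α → ℝ) (hf : ∀ b, Continuous (f b)) :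
    Continuous (fun x : α => A.inf' hA (fun b => f b x)) := by
  induction hA using Finset.Nonempty.cons_induction with
  | singleton b => simpa using hf b
  | cons b A hbA hA ih =>
      have : (fun x : α => (Finset.cons b A hbA).inf' (Finset.cons_nonempty hbA)
          (fun b' => f b' x)) =
          (fun x : α => min (f b x) (A.inf' hA (fun b' => f b' x))) := by
        funext x
        exact Finset.inf'_cons hA _
      rw [this]
      exact (hf b).min ih

lemma minb_continuous (hG : G.IsGame) (v : S → ℝ) (s : S) :
    Continuous (fun x : M → ℝ => minb hG v s x) := by
  exact inf'_continuous (hG.2.1 s) _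
    (fun b => continuous_finset_sum _ fun a _ => (continuous_apply a).mul continuous_const)

/-- attainment of the sup in `preB`. -/
lemma preB_attained (hG : G.IsGame) {v : S → ℝ} (hv0 : ∀ t, 0 ≤ v t) (hv1 : ∀ t, v t ≤ 1) (s : S) :
    ∃ x, IsDistOn (G.Γ₁ s) x ∧ minb hG v s x = preB hG v s := by
  obtain ⟨x, hx, hmax⟩ := (distSet_compact (G.Γ₁ s)).exists_isMaxOn
    (distSet_nonempty (hG.1 s)) ((minb_continuous hG v s).continuousOn)
  refine ⟨x, hx, le_antisymm (minb_le_preB hG hv1 s hx) ?_⟩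
  apply Real.sSup_le
  · rintro r ⟨y, hy, rfl⟩
    exact hmax hy
  · exact minb_nonneg hG hv0 s hx.1

section VIter

variable (hG : G.IsGame) (F : Set S)

/-- safety value iteration. -/
noncomputable def vit : ℕ → S → ℝ
  | 0 => fun s => if s ∈ F then 1 else 0
  | n + 1 => fun s => if s ∈ F then preB hG (vit n) s else 0

lemma vit_bounds : ∀ n s, 0 ≤ vit hG F n s ∧ vit hG F n s ≤ 1 := by
  intro n
  induction n with
  | zero => intro s; by_cases h : s ∈ F <;> simp [vit, h]
  | succ n ih =>
      intro s
      by_cases h : s ∈ F <;> simp only [vit, h, if_true, if_false]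
      · exact ⟨preB_nonneg hG (fun t => (ih t).1) (fun t => (ih t).2) s,
          preB_le_one hG (fun t => (ih t).2) s⟩
      · exact ⟨le_refl 0, zero_le_one⟩

lemma vit_nonneg : ∀ n s, 0 ≤ vit hG F n s := fun n s => (vit_bounds hG F n s).1

lemma vit_le_one : ∀ n s, vit hG F n s ≤ 1 := fun n s => (vit_bounds hG F n s).2

lemma vit_antitone : ∀ n s, vit hG F (n + 1) s ≤ vit hG F n s := by
  intro n
  induction n with
  | zero =>
      intro s
      by_cases h : s ∈ F <;> simp only [vit, h, if_true, if_false]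
      · exact preB_le_one hG (fun t => by by_cases ht : t ∈ F <;> simp [ht]) s
      · exact le_refl 0
  | succ n ih =>
      intro s
      by_cases h : s ∈ F <;> simp only [vit, h, if_true, if_false]
      · have := preB_translate hG (le_refl (0:ℝ)) (vit_nonneg hG F n) (vit_le_one hG F n)
          (fun t => by simpa using ih t) s
        rw [add_zero] at this
        exact this
      · exact le_refl 0

/-- the limit of the value iteration. -/
noncomputable def vstar : S → ℝ := fun s => ⨅ n : ℕ, vit hG F n s

lemma vstar_le_vit (n : ℕ) (s : S) : vstar hG F s ≤ vit hG F n s :=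
  ciInf_le ⟨0, fun r ⟨m, hm⟩ => hm ▸ vit_nonneg hG F m s⟩ n

lemma vstar_nonneg (s : S) : 0 ≤ vstar hG F s :=
  le_ciInf fun n => vit_nonneg hG F n s

lemma vstar_le_one (s : S) : vstar hG F s ≤ 1 :=
  le_trans (vstar_le_vit hG F 0 s) (vit_le_one hG F 0 s)

lemma vstar_eq_zero_off (s : S) (hs : s ∉ F) : vstar hG F s = 0 := by
  have h1 := vstar_le_vit hG F 0 s
  simp only [vit, hs, if_false] at h1
  exact le_antisymm h1 (vstar_nonneg hG F s)

lemma vit_mono_le {n m : ℕ} (h : n ≤ m) (s : S) : vit hG F m s ≤ vit hG F n s := by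
  induction m with
  | zero => simp_all
  | succ m ih =>
      rcases Nat.lt_or_ge n (m+1) with h' | h'
      · exact le_trans (vit_antitone hG F m s) (ih (Nat.lt_succ_iff.1 h'))
      · have : n = m + 1 := le_antisymm h h'
        subst this
        exact le_refl _

/-- the crucial fixpoint inequality. -/
lemma vstar_fix (s : S) (hs : s ∈ F) : vstar hG F s ≤ preB hG (vstar hG F) s := by
  have key : ∀ ε > (0:ℝ), vstar hG F s ≤ preB hG (vstar hG F) s + ε := by
    intro ε hε
    -- find n with vit n t ≤ vstar t + ε for all t
    have hex : ∀ t : S, ∃ n : ℕ, vit hG F n t < vstar hG F t + ε := by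
      intro t
      apply exists_lt_of_ciInf_lt
      have : vstar hG F t < vstar hG F t + ε := by linarith
      exact this
    choose nf hnf using hex
    set N := Finset.univ.sup nf with hN
    have hNle : ∀ t, vit hG F N t ≤ vstar hG F t + ε := by
      intro t
      have h1 : nf t ≤ N := Finset.le_sup (Finset.mem_univ t)
      exact le_trans (vit_mono_le hG F h1 t) (le_of_lt (hnf t))
    have h2 : preB hG (vit hG F N) s ≤ preB hG (vstar hG F) s + ε :=
      preB_translate hG (le_of_lt hε) (vstar_nonneg hG F) (vstar_le_one hG F) hNle s
    have h3 : vstar hG F s ≤ vit hG F (N+1) s := vstar_le_vit hG F (N+1) s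
    have h4 : vit hG F (N+1) s = preB hG (vit hG F N) s := by simp [vit, hs]
    linarith
  by_contra h
  push_neg at h
  obtain ⟨ε, hε⟩ : ∃ ε > (0:ℝ), preB hG (vstar hG F) s + ε < vstar hG F s :=
    ⟨(vstar hG F s - preB hG (vstar hG F) s)/2, by linarith, by linarith⟩
  exact absurd (key _ hε.1) (not_le.2 hε.2)

end VIter

section SafeW

variable (F : Set S)

lemma pureDist_dist {b : M} {A : Finset M} (hb : b ∈ A) : IsDistOn A (pureDist b) := by
  refine ⟨fun a => ?_, fun a ha => ?_, ?_⟩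
  · unfold pureDist; by_cases h : a = b <;> simp [h]
  · unfold pureDist at ha
    by_cases h : a = b
    · exact h ▸ hb
    · simp [h] at ha
  · simp [pureDist]

/-- a default player-2 strategy. -/
noncomputable def purestrat2 (hG : G.IsGame) : List S → S → M → ℝ :=
  fun _ s => pureDist (hG.2.1 s).choose

lemma purestrat2_isStrat (hG : G.IsGame) : IsStrat2 G (purestrat2 hG) :=
  fun w s => pureDist_dist (hG.2.1 s).choose_spec

lemma strat2_nonempty (hG : G.IsGame) : Nonempty {σ // IsStrat2 G σ} :=
  ⟨⟨purestrat2 hG, purestrat2_isStrat hG⟩⟩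

lemma safeW_nonneg (hG : G.IsGame) {σ₁ σ₂ : List S → S → M → ℝ} (h₁ : ∀ w s a, 0 ≤ σ₁ w s a)
    (h₂ : ∀ w s a, 0 ≤ σ₂ w s a) : ∀ n w s, 0 ≤ safeW G σ₁ σ₂ F n w s := by
  intro n
  induction n with
  | zero => intro w s; by_cases h : s ∈ F <;> simp [safeW, h]
  | succ n ih =>
      intro w s
      by_cases h : s ∈ F <;> simp only [safeW, h, if_true, if_false]
      · apply Finset.sum_nonneg; intro a _
        apply Finset.sum_nonneg; intro b _
        apply Finset.sum_nonneg; intro t _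
        have := hG.2.2.1 s a b t
        have := ih (w ++ [s]) t
        have := h₁ w s a
        have := h₂ w s b
        positivity
      · exact le_refl 0

lemma safeW_zero_le_one (σ₁ σ₂ : List S → S → M → ℝ) (w : List S) (s : S) :
    safeW G σ₁ σ₂ F 0 w s ≤ 1 := by
  by_cases h : s ∈ F <;> simp [safeW, h]

/-- restructured one-step recursion for `safeW`. -/
lemma safeW_step (σ₁ σ₂ : List S → S → M → ℝ) (n : ℕ) (w : List S) (s : S) :
    safeW G σ₁ σ₂ F (n+1) w s = if s ∈ F then
      ∑ b, σ₂ w s b * ∑ a, σ₁ w s a * ∑ t, G.δ s a b t * safeW G σ₁ σ₂ F n (w ++ [s]) t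
    else 0 := by
  by_cases h : s ∈ F <;> simp only [safeW, h, if_true, if_false]
  rw [Finset.sum_comm]
  simp only [Finset.mul_sum]
  apply Finset.sum_congr rfl
  intro b _
  apply Finset.sum_congr rfl
  intro a _
  apply Finset.sum_congr rfl
  intro t _
  ring

lemma prSafe_nonneg (hG : G.IsGame) {σ₁ σ₂ : List S → S → M → ℝ} (h₁ : ∀ w s a, 0 ≤ σ₁ w s a)
    (h₂ : ∀ w s a, 0 ≤ σ₂ w s a) (s : S) : 0 ≤ prSafe G σ₁ σ₂ F s :=
  le_ciInf fun n => safeW_nonneg F hG h₁ h₂ n [] s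

lemma prSafe_le_one (hG : G.IsGame) {σ₁ σ₂ : List S → S → M → ℝ} (h₁ : ∀ w s a, 0 ≤ σ₁ w s a)
    (h₂ : ∀ w s a, 0 ≤ σ₂ w s a) (s : S) : prSafe G σ₁ σ₂ F s ≤ 1 := by
  have h0 : prSafe G σ₁ σ₂ F s ≤ safeW G σ₁ σ₂ F 0 [] s :=
    ciInf_le ⟨0, fun r ⟨m, hm⟩ => hm ▸ safeW_nonneg F hG h₁ h₂ m [] s⟩ 0
  exact le_trans h0 (safeW_zero_le_one F σ₁ σ₂ [] s)

lemma valSafeUnder_nonneg (hG : G.IsGame) {σ₁ : List S → S → M → ℝ} (h₁ : ∀ w s a, 0 ≤ σ₁ w s a)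
    (s : S) : 0 ≤ valSafeUnder G σ₁ F s := by
  have := strat2_nonempty hG
  exact le_ciInf fun σ₂ => prSafe_nonneg F hG h₁ (fun w s' a => (σ₂.2 w s').1 a) s

lemma valSafeUnder_le_one (hG : G.IsGame) {σ₁ : List S → S → M → ℝ} (h₁ : ∀ w s a, 0 ≤ σ₁ w s a)
    (s : S) : valSafeUnder G σ₁ F s ≤ 1 := by
  have hne := strat2_nonempty hG
  have hbdd : BddBelow (Set.range fun σ₂ : {σ // IsStrat2 G σ} => prSafe G σ₁ σ₂.1 F s) :=
    ⟨0, fun r ⟨σ₂, hm⟩ => hm ▸ prSafe_nonneg F hG h₁ (fun w s' a => (σ₂.2 w s').1 a) s⟩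
  obtain ⟨σ₂⟩ := hne
  exact le_trans (ciInf_le hbdd σ₂)
    (prSafe_le_one F hG h₁ (fun w s' a => (σ₂.2 w s').1 a) s)

lemma valSafeUnder_bddAbove (hG : G.IsGame) (s : S) :
    BddAbove (Set.range fun σ₁ : {σ // IsStrat1 G σ} => valSafeUnder G σ₁.1 F s) :=
  ⟨1, fun r ⟨σ₁, hm⟩ => hm ▸ valSafeUnder_le_one F hG (fun w s' a => (σ₁.2 w s').1 a) s⟩

lemma valSafeUnder_le_valSafe (hG : G.IsGame) {σ₁ : List S → S → M → ℝ} (h₁ : IsStrat1 G σ₁) (s : S) :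
    valSafeUnder G σ₁ F s ≤ valSafe G F s :=
  le_ciSup (valSafeUnder_bddAbove F hG s) (⟨σ₁, h₁⟩ : {σ // IsStrat1 G σ})

lemma ml_isStrat1 {ξ : S → M → ℝ} (hξ : IsSel1 G ξ) : IsStrat1 G (ml ξ) :=
  fun _ s => hξ s

end SafeW

section UpperBound

/-- a pure memoryless player-1 strategy, for nonemptiness. -/
noncomputable def purestrat1 (hG : G.IsGame) : List S → S → M → ℝ :=
  fun _ s => pureDist (hG.1 s).choose

lemma purestrat1_isStrat (hG : G.IsGame) : IsStrat1 G (purestrat1 hG) :=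
  fun w s => pureDist_dist (hG.1 s).choose_spec

lemma strat1_nonempty (hG : G.IsGame) : Nonempty {σ // IsStrat1 G σ} :=
  ⟨⟨purestrat1 hG, purestrat1_isStrat hG⟩⟩

/-- a counter-optimal pure move. -/
noncomputable def bmin (hG : G.IsGame) (v : S → ℝ) (s : S) (x : M → ℝ) : M :=
  (Finset.exists_mem_eq_inf' (hG.2.1 s) (fun b => ∑ a, x a * pay G v s a b)).choose

lemma bmin_mem (hG : G.IsGame) (v : S → ℝ) (s : S) (x : M → ℝ) :
    bmin hG v s x ∈ G.Γ₂ s :=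
  (Finset.exists_mem_eq_inf' (hG.2.1 s) (fun b => ∑ a, x a * pay G v s a b)).choose_spec.1

lemma bmin_eq (hG : G.IsGame) (v : S → ℝ) (s : S) (x : M → ℝ) :
    minb hG v s x = ∑ a, x a * pay G v s a (bmin hG v s x) :=
  (Finset.exists_mem_eq_inf' (hG.2.1 s) (fun b => ∑ a, x a * pay G v s a b)).choose_spec.2

/-- the horizon-`n` greedy counter-strategy against `σ₁`. -/
noncomputable def resp (hG : G.IsGame) (F : Set S) (σ₁ : List S → S → M → ℝ) (n : ℕ) :
    List S → S → M → ℝ :=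
  fun w s => pureDist (bmin hG (vit hG F (n - 1 - w.length)) s (σ₁ w s))

lemma resp_isStrat (hG : G.IsGame) (F : Set S) (σ₁ : List S → S → M → ℝ) (n : ℕ) :
    IsStrat2 G (resp hG F σ₁ n) :=
  fun w s => pureDist_dist (bmin_mem hG _ s (σ₁ w s))

lemma safeW_resp_le (hG : G.IsGame) (F : Set S) {σ₁ : List S → S → M → ℝ}
    (h₁ : IsStrat1 G σ₁) (n : ℕ) :
    ∀ m w s, m + w.length = n → safeW G σ₁ (resp hG F σ₁ n) F m w s ≤ vit hG F m s := by
  intro m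
  induction m with
  | zero =>
      intro w s _
      by_cases h : s ∈ F <;> simp [safeW, vit, h]
  | succ m ih =>
      intro w s hmw
      rw [safeW_step]
      by_cases h : s ∈ F
      swap
      · simp only [h, if_false, vit, if_false]
        exact le_refl 0
      simp only [h, if_true]
      set b' := bmin hG (vit hG F m) s (σ₁ w s) with hb'
      have hresp : resp hG F σ₁ n w s = pureDist b' := by
        have : n - 1 - w.length = m := by omega
        rw [resp, this]
      rw [hresp]
      have hsum : ∑ b, pureDist b' b *
          (∑ a, σ₁ w s a * ∑ t, G.δ s a b t * safeW G σ₁ (resp hG F σ₁ n) F m (w ++ [s]) t)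
          = ∑ a, σ₁ w s a * ∑ t, G.δ s a b' t * safeW G σ₁ (resp hG F σ₁ n) F m (w ++ [s]) t := by
        rw [Finset.sum_congr rfl (fun b _ => by
          unfold pureDist
          rw [ite_mul, one_mul, zero_mul] :
          ∀ b ∈ Finset.univ, pureDist b' b *
            (∑ a, σ₁ w s a * ∑ t, G.δ s a b t * safeW G σ₁ (resp hG F σ₁ n) F m (w ++ [s]) t)
            = if b = b' then
              (∑ a, σ₁ w s a * ∑ t, G.δ s a b t * safeW G σ₁ (resp hG F σ₁ n) F m (w ++ [s]) t)
              else 0)]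
        rw [Finset.sum_ite_eq' Finset.univ b']
        simp
      rw [hsum]
      have hIH : ∀ t, safeW G σ₁ (resp hG F σ₁ n) F m (w ++ [s]) t ≤ vit hG F m t := by
        intro t
        apply ih
        simp at hmw ⊢
        omega
      have step1 : ∑ a, σ₁ w s a * ∑ t, G.δ s a b' t * safeW G σ₁ (resp hG F σ₁ n) F m (w ++ [s]) t
          ≤ ∑ a, σ₁ w s a * pay G (vit hG F m) s a b' := by
        apply Finset.sum_le_sum
        intro a _
        apply mul_le_mul_of_nonneg_left _ ((h₁ w s).1 a)
        apply Finset.sum_le_sum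
        intro t _
        exact mul_le_mul_of_nonneg_left (hIH t) (hG.2.2.1 s a b' t)
      have step2 : ∑ a, σ₁ w s a * pay G (vit hG F m) s a b' = minb hG (vit hG F m) s (σ₁ w s) :=
        (bmin_eq hG (vit hG F m) s (σ₁ w s)).symm
      have step3 : minb hG (vit hG F m) s (σ₁ w s) ≤ preB hG (vit hG F m) s :=
        minb_le_preB hG (vit_le_one hG F m) s (h₁ w s)
      have step4 : vit hG F (m+1) s = preB hG (vit hG F m) s := by
        simp [vit, h]
      linarith

lemma valSafeUnder_le_vit (hG : G.IsGame) (F : Set S) {σ₁ : List S → S → M → ℝ}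
    (h₁ : IsStrat1 G σ₁) (n : ℕ) (s : S) :
    valSafeUnder G σ₁ F s ≤ vit hG F n s := by
  have h₁' : ∀ w s a, 0 ≤ σ₁ w s a := fun w s a => (h₁ w s).1 a
  have hσ₂ := resp_isStrat hG F σ₁ n
  have hσ₂' : ∀ w s a, 0 ≤ resp hG F σ₁ n w s a := fun w s a => (hσ₂ w s).1 a
  have h0 : valSafeUnder G σ₁ F s ≤ prSafe G σ₁ (resp hG F σ₁ n) F s := by
    refine ciInf_le ⟨0, fun r ⟨σ₂, hm⟩ => hm ▸ ?_⟩ (⟨_, hσ₂⟩ : {σ // IsStrat2 G σ})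
    exact prSafe_nonneg F hG h₁' (fun w s' a => (σ₂.2 w s').1 a) s
  have h1 : prSafe G σ₁ (resp hG F σ₁ n) F s ≤ safeW G σ₁ (resp hG F σ₁ n) F n [] s :=
    ciInf_le ⟨0, fun r ⟨m, hm⟩ => hm ▸ safeW_nonneg F hG h₁' hσ₂' m [] s⟩ n
  have h2 := safeW_resp_le hG F h₁ n n [] s (by simp)
  linarith

lemma valSafe_le_vstar (hG : G.IsGame) (F : Set S) (s : S) :
    valSafe G F s ≤ vstar hG F s := by
  have := strat1_nonempty hG
  apply ciSup_le
  intro σ₁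
  apply le_ciInf
  intro n
  exact valSafeUnder_le_vit hG F σ₁.2 n s

end UpperBound

section Certificate

lemma dist_exists_ne_zero {A : Finset M} {x : M → ℝ} (hx : IsDistOn A x) :
    ∃ a, x a ≠ 0 := by
  by_contra h
  push_neg at h
  have h0 : ∑ a, x a = 0 := Finset.sum_eq_zero fun a _ => h a
  rw [hx.2.2] at h0
  norm_num at h0

lemma dist_le_one {A : Finset M} {x : M → ℝ} (hx : IsDistOn A x) (a : M) : x a ≤ 1 := by
  have h := Finset.single_le_sum (f := x) (fun b _ => hx.1 b) (Finset.mem_univ a)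
  rwa [hx.2.2] at h

/-- an optimal memoryless selector at the fixpoint `vstar`. -/
noncomputable def xistar (hG : G.IsGame) (F : Set S) : S → M → ℝ := fun s =>
  (preB_attained hG (vstar_nonneg hG F) (vstar_le_one hG F) s).choose

lemma xistar_dist (hG : G.IsGame) (F : Set S) (s : S) :
    IsDistOn (G.Γ₁ s) (xistar hG F s) :=
  (preB_attained hG (vstar_nonneg hG F) (vstar_le_one hG F) s).choose_spec.1

lemma xistar_minb (hG : G.IsGame) (F : Set S) (s : S) :
    minb hG (vstar hG F) s (xistar hG F s) = preB hG (vstar hG F) s :=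
  (preB_attained hG (vstar_nonneg hG F) (vstar_le_one hG F) s).choose_spec.2

lemma xistar_opt (hG : G.IsGame) (F : Set S) {s : S} (hs : s ∈ F) {b : M}
    (hb : b ∈ G.Γ₂ s) :
    vstar hG F s ≤ ∑ a, xistar hG F s a * pay G (vstar hG F) s a b := by
  have h1 := vstar_fix hG F s hs
  have h2 := xistar_minb hG F s
  have h3 := minb_le hG (vstar hG F) s (xistar hG F s) hb
  linarith

/-- minimum positive probability of the optimal selector. -/
noncomputable def ximin (hG : G.IsGame) (F : Set S) : ℝ :=
  if h : ((Finset.univ : Finset (S × M)).filter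
      (fun p => xistar hG F p.1 p.2 ≠ 0)).Nonempty then
    ((Finset.univ : Finset (S × M)).filter
      (fun p => xistar hG F p.1 p.2 ≠ 0)).inf' (by exact h) (fun p => xistar hG F p.1 p.2)
  else 1

lemma ximin_pos (hG : G.IsGame) (F : Set S) : 0 < ximin hG F := by
  rw [ximin]
  split
  · rename_i h
    obtain ⟨p, hp, hEq⟩ := Finset.exists_mem_eq_inf' h (fun p => xistar hG F p.1 p.2)
    rw [hEq]
    have hne := (Finset.mem_filter.1 hp).2
    exact lt_of_le_of_ne ((xistar_dist hG F p.1).1 p.2) (Ne.symm hne)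
  · exact one_pos

lemma ximin_le_one (hG : G.IsGame) (F : Set S) : ximin hG F ≤ 1 := by
  rw [ximin]
  split
  · rename_i h
    obtain ⟨p, hp, hEq⟩ := Finset.exists_mem_eq_inf' h (fun p => xistar hG F p.1 p.2)
    rw [hEq]
    exact dist_le_one (xistar_dist hG F p.1) p.2
  · exact le_refl 1

lemma ximin_le (hG : G.IsGame) (F : Set S) {s : S} {a : M} (h : xistar hG F s a ≠ 0) :
    ximin hG F ≤ xistar hG F s a := by
  have hmem : (s, a) ∈ (Finset.univ : Finset (S × M)).filter
      (fun p => xistar hG F p.1 p.2 ≠ 0) := Finset.mem_filter.2 ⟨Finset.mem_univ _, h⟩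
  rw [ximin, dif_pos ⟨_, hmem⟩]
  exact Finset.inf'_le _ hmem

/-- minimum positive transition probability. -/
noncomputable def dmin (G : CGame S M) : ℝ :=
  if h : ((Finset.univ : Finset ((S × M) × M × S)).filter
      (fun q => G.δ q.1.1 q.1.2 q.2.1 q.2.2 ≠ 0)).Nonempty then
    ((Finset.univ : Finset ((S × M) × M × S)).filter
      (fun q => G.δ q.1.1 q.1.2 q.2.1 q.2.2 ≠ 0)).inf' h
      (fun q => G.δ q.1.1 q.1.2 q.2.1 q.2.2)
  else 1

lemma dmin_pos (hG : G.IsGame) : 0 < dmin G := by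
  rw [dmin]
  split
  · rename_i h
    obtain ⟨q, hq, hEq⟩ := Finset.exists_mem_eq_inf' h
      (fun q : (S × M) × M × S => G.δ q.1.1 q.1.2 q.2.1 q.2.2)
    rw [hEq]
    have hne := (Finset.mem_filter.1 hq).2
    exact lt_of_le_of_ne (hG.2.2.1 _ _ _ _) (Ne.symm hne)
  · exact one_pos

lemma dmin_le_one (hG : G.IsGame) : dmin G ≤ 1 := by
  rw [dmin]
  split
  · rename_i h
    obtain ⟨q, hq, hEq⟩ := Finset.exists_mem_eq_inf' h
      (fun q : (S × M) × M × S => G.δ q.1.1 q.1.2 q.2.1 q.2.2)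
    rw [hEq]
    have h1 : G.δ q.1.1 q.1.2 q.2.1 q.2.2 ≤ ∑ t, G.δ q.1.1 q.1.2 q.2.1 t :=
      Finset.single_le_sum (fun t _ => hG.2.2.1 _ _ _ t) (Finset.mem_univ _)
    rw [hG.2.2.2] at h1
    exact h1
  · exact le_refl 1

lemma dmin_le (hG : G.IsGame) {s : S} {a b : M} {t : S} (h : G.δ s a b t ≠ 0) :
    dmin G ≤ G.δ s a b t := by
  have hmem : ((s, a), (b, t)) ∈ (Finset.univ : Finset ((S × M) × M × S)).filter
      (fun q => G.δ q.1.1 q.1.2 q.2.1 q.2.2 ≠ 0) :=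
    Finset.mem_filter.2 ⟨Finset.mem_univ _, h⟩
  rw [dmin, dif_pos ⟨_, hmem⟩]
  exact Finset.inf'_le _ hmem

/-- minimum gap between distinct values of `vstar`. -/
noncomputable def gap0 (hG : G.IsGame) (F : Set S) : ℝ :=
  if h : ((Finset.univ : Finset (S × S)).filter
      (fun p => vstar hG F p.1 ≠ vstar hG F p.2)).Nonempty then
    ((Finset.univ : Finset (S × S)).filter
      (fun p => vstar hG F p.1 ≠ vstar hG F p.2)).inf' (by exact h)
      (fun p => |vstar hG F p.1 - vstar hG F p.2|)
  else 1

lemma gap0_pos (hG : G.IsGame) (F : Set S) : 0 < gap0 hG F := by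
  rw [gap0]
  split
  · rename_i h
    obtain ⟨q, hq, hEq⟩ := Finset.exists_mem_eq_inf' h
      (fun p : S × S => |vstar hG F p.1 - vstar hG F p.2|)
    rw [hEq]
    have hne := (Finset.mem_filter.1 hq).2
    exact abs_pos.2 (sub_ne_zero.2 hne)
  · exact one_pos

lemma gap0_le_one (hG : G.IsGame) (F : Set S) : gap0 hG F ≤ 1 := by
  rw [gap0]
  split
  · rename_i h
    obtain ⟨q, hq, hEq⟩ := Finset.exists_mem_eq_inf' h
      (fun p : S × S => |vstar hG F p.1 - vstar hG F p.2|)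
    rw [hEq]
    rw [abs_sub_le_iff]
    have := vstar_nonneg hG F q.1
    have := vstar_nonneg hG F q.2
    have := vstar_le_one hG F q.1
    have := vstar_le_one hG F q.2
    constructor <;> linarith
  · exact le_refl 1

lemma gap0_le (hG : G.IsGame) (F : Set S) {p q : S} (h : vstar hG F p ≠ vstar hG F q) :
    gap0 hG F ≤ |vstar hG F p - vstar hG F q| := by
  have hmem : (p, q) ∈ (Finset.univ : Finset (S × S)).filter
      (fun p => vstar hG F p.1 ≠ vstar hG F p.2) :=
    Finset.mem_filter.2 ⟨Finset.mem_univ _, h⟩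
  rw [gap0, dif_pos ⟨_, hmem⟩]
  exact Finset.inf'_le _ hmem

/-- the robustness constant. -/
noncomputable def Bq (hG : G.IsGame) (F : Set S) : ℝ :=
  ximin hG F * dmin G * gap0 hG F ^ 2

lemma Bq_pos (hG : G.IsGame) (F : Set S) : 0 < Bq hG F :=
  mul_pos (mul_pos (ximin_pos hG F) (dmin_pos hG)) (pow_pos (gap0_pos hG F) 2)

lemma Bq_le_one (hG : G.IsGame) (F : Set S) : Bq hG F ≤ 1 := by
  have h1 := ximin_pos hG F
  have h2 := dmin_pos hG
  have h3 := gap0_pos hG F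
  have h4 := ximin_le_one hG F
  have h5 := dmin_le_one hG
  have h6 := gap0_le_one hG F
  calc ximin hG F * dmin G * gap0 hG F ^ 2 ≤ 1 * 1 * 1 ^ 2 := by
        apply mul_le_mul
        · apply mul_le_mul h4 h5 (le_of_lt h2) zero_le_one
        · rw [one_pow]
          nlinarith
        · positivity
        · norm_num
    _ = 1 := by norm_num

/-- designated support move used to absorb rounding. -/
noncomputable def a1 (hG : G.IsGame) (F : Set S) (s : S) : M :=
  (dist_exists_ne_zero (xistar_dist hG F s)).choose

lemma a1_ne (hG : G.IsGame) (F : Set S) (s : S) : xistar hG F s (a1 hG F s) ≠ 0 :=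
  (dist_exists_ne_zero (xistar_dist hG F s)).choose_spec

/-- support of `xistar` minus the designated move. -/
noncomputable def suppE (hG : G.IsGame) (F : Set S) (s : S) : Finset M :=
  (Finset.univ.filter (fun a => xistar hG F s a ≠ 0)).erase (a1 hG F s)

/-- total rounded-down numerator mass outside the designated move. -/
noncomputable def Nk (hG : G.IsGame) (F : Set S) (k : ℕ) (s : S) : ℕ :=
  ∑ a ∈ suppE hG F s, ⌊xistar hG F s a * k⌋₊

/-- the `k`-uniform rounding of `xistar`. -/
noncomputable def rnd (hG : G.IsGame) (F : Set S) (k : ℕ) : S → M → ℝ := fun s a =>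
  if a = a1 hG F s then ((k - Nk hG F k s : ℕ) : ℝ) / k
  else if xistar hG F s a ≠ 0 then (⌊xistar hG F s a * k⌋₊ : ℝ) / k else 0

lemma sum_suppE (hG : G.IsGame) (F : Set S) (s : S) :
    ∑ a ∈ suppE hG F s, xistar hG F s a = 1 - xistar hG F s (a1 hG F s) := by
  have h1 : ∑ a ∈ Finset.univ.filter (fun a => xistar hG F s a ≠ 0), xistar hG F s a
      = ∑ a, xistar hG F s a := Finset.sum_filter_ne_zero _
  have hmem : a1 hG F s ∈ Finset.univ.filter (fun a => xistar hG F s a ≠ 0) :=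
    Finset.mem_filter.2 ⟨Finset.mem_univ _, a1_ne hG F s⟩
  have h2 := Finset.add_sum_erase _ (fun a => xistar hG F s a) hmem
  rw [(xistar_dist hG F s).2.2] at h1
  rw [suppE]
  linarith [h2.symm ▸ h1]

lemma Nk_le_real (hG : G.IsGame) (F : Set S) (k : ℕ) (s : S) :
    ((Nk hG F k s : ℝ)) ≤ k * (1 - xistar hG F s (a1 hG F s)) := by
  have h1 : ((Nk hG F k s : ℝ)) = ∑ a ∈ suppE hG F s, ((⌊xistar hG F s a * k⌋₊ : ℝ)) := by
    rw [Nk, Nat.cast_sum]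
  rw [h1]
  have h2 : ∑ a ∈ suppE hG F s, ((⌊xistar hG F s a * k⌋₊ : ℝ))
      ≤ ∑ a ∈ suppE hG F s, xistar hG F s a * k := by
    apply Finset.sum_le_sum
    intro a _
    exact Nat.floor_le (mul_nonneg ((xistar_dist hG F s).1 a) (Nat.cast_nonneg k))
  have h3 : ∑ a ∈ suppE hG F s, xistar hG F s a * k
      = k * (1 - xistar hG F s (a1 hG F s)) := by
    rw [← Finset.sum_mul, sum_suppE hG F s]
    ring
  linarith

lemma Nk_le (hG : G.IsGame) (F : Set S) (k : ℕ) (s : S) : Nk hG F k s ≤ k := by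
  have h1 := Nk_le_real hG F k s
  have h2 : (k : ℝ) * (1 - xistar hG F s (a1 hG F s)) ≤ k := by
    have := (xistar_dist hG F s).1 (a1 hG F s)
    nlinarith [Nat.cast_nonneg (α := ℝ) k]
  exact_mod_cast le_trans h1 h2

lemma rnd_a1_ge (hG : G.IsGame) (F : Set S) {k : ℕ} (hk : 1 ≤ k) (s : S) :
    xistar hG F s (a1 hG F s) ≤ rnd hG F k s (a1 hG F s) := by
  rw [rnd, if_pos rfl, Nat.cast_sub (Nk_le hG F k s)]
  have hkpos : (0:ℝ) < k := by exact_mod_cast hk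
  rw [ge_iff_le.symm, ge_iff_le, le_div_iff₀ hkpos]
  have := Nk_le_real hG F k s
  nlinarith

lemma rnd_nonneg (hG : G.IsGame) (F : Set S) {k : ℕ} (hk : 1 ≤ k) (s : S) (a : M) :
    0 ≤ rnd hG F k s a := by
  have hkpos : (0:ℝ) < k := by exact_mod_cast hk
  rw [rnd]
  split
  · positivity
  · split
    · positivity
    · exact le_refl 0

lemma rnd_supp (hG : G.IsGame) (F : Set S) {k : ℕ} (s : S) (a : M)
    (h : rnd hG F k s a ≠ 0) : xistar hG F s a ≠ 0 := by
  rw [rnd] at h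
  by_cases h1 : a = a1 hG F s
  · rw [h1]; exact a1_ne hG F s
  · rw [if_neg h1] at h
    by_cases h2 : xistar hG F s a ≠ 0
    · exact h2
    · rw [if_neg h2] at h
      exact absurd rfl h

lemma rnd_sum (hG : G.IsGame) (F : Set S) {k : ℕ} (hk : 1 ≤ k) (s : S) :
    ∑ a, rnd hG F k s a = 1 := by
  have hkpos : (0:ℝ) < k := by exact_mod_cast hk
  have hsplit := Finset.add_sum_erase Finset.univ (rnd hG F k s)
    (Finset.mem_univ (a1 hG F s))
  have hrest : ∑ a ∈ Finset.univ.erase (a1 hG F s), rnd hG F k s a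
      = ((Nk hG F k s : ℝ)) / k := by
    have h1 : ∀ a ∈ Finset.univ.erase (a1 hG F s), rnd hG F k s a
        = if xistar hG F s a ≠ 0 then ((⌊xistar hG F s a * k⌋₊ : ℝ)) / k else 0 := by
      intro a ha
      rw [rnd, if_neg (Finset.mem_erase.1 ha).1]
    rw [Finset.sum_congr rfl h1, Finset.sum_ite, Finset.sum_const, smul_zero, add_zero]
    have h2 : (Finset.univ.erase (a1 hG F s)).filter (fun a => xistar hG F s a ≠ 0)
        = suppE hG F s := by
      rw [suppE]
      ext a
      simp only [Finset.mem_filter, Finset.mem_erase, Finset.mem_univ, true_and]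
      tauto
    rw [h2, Nk, Nat.cast_sum, Finset.sum_div]
  rw [← hsplit, hrest, rnd, if_pos rfl, Nat.cast_sub (Nk_le hG F k s)]
  field_simp
  ring

lemma rnd_isSel (hG : G.IsGame) (F : Set S) {k : ℕ} (hk : 1 ≤ k) :
    IsSel1 G (rnd hG F k) := by
  intro s
  exact ⟨rnd_nonneg hG F hk s, fun a ha => (xistar_dist hG F s).2.1 a (rnd_supp hG F s a ha),
    rnd_sum hG F hk s⟩

lemma rnd_kuniform (hG : G.IsGame) (F : Set S) {k : ℕ} (hk : 1 ≤ k) :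
    KUniform k (rnd hG F k) := by
  intro s a
  rw [rnd]
  by_cases h1 : a = a1 hG F s
  · rw [if_pos h1]
    exact ⟨k - Nk hG F k s, k, Nat.sub_le _ _, le_refl k, rfl⟩
  · rw [if_neg h1]
    by_cases h2 : xistar hG F s a ≠ 0
    · rw [if_pos h2]
      refine ⟨⌊xistar hG F s a * k⌋₊, k, ?_, le_refl k, rfl⟩
      calc ⌊xistar hG F s a * k⌋₊ ≤ ⌊(k:ℝ)⌋₊ := by
            apply Nat.floor_le_floor
            nlinarith [dist_le_one (xistar_dist hG F s) a, (xistar_dist hG F s).1 a,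
              Nat.cast_nonneg (α := ℝ) k]
        _ = k := Nat.floor_natCast k
    · rw [if_neg h2]
      exact ⟨0, 1, zero_le_one, hk, by norm_num⟩

lemma rnd_lower (hG : G.IsGame) (F : Set S) {k : ℕ} (hk : 1 ≤ k) {κ : ℝ} (hκ0 : 0 ≤ κ)
    (hkκ : 1 / (k:ℝ) ≤ κ * ximin hG F) (s : S) (a : M) :
    (1 - κ) * xistar hG F s a ≤ rnd hG F k s a := by
  have hkpos : (0:ℝ) < k := by exact_mod_cast hk
  by_cases h1 : a = a1 hG F s
  · subst h1
    have h2 := rnd_a1_ge hG F hk s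
    have h3 := (xistar_dist hG F s).1 (a1 hG F s)
    nlinarith
  · by_cases h2 : xistar hG F s a ≠ 0
    · have hfloor : xistar hG F s a * k - 1 < (⌊xistar hG F s a * k⌋₊ : ℝ) :=
        Nat.sub_one_lt_floor _
      have hrnd : rnd hG F k s a = ((⌊xistar hG F s a * k⌋₊ : ℝ)) / k := by
        rw [rnd, if_neg h1, if_pos h2]
      rw [hrnd]
      rw [le_div_iff₀ hkpos]
      have hxm := ximin_le hG F h2
      have hxm2 := ximin_pos hG F
      have h1k : 1 ≤ κ * ximin hG F * k := by
        rw [div_le_iff₀ hkpos] at hkκ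
        linarith
      have hx0 := (xistar_dist hG F s).1 a
      nlinarith
    · push_neg at h2
      rw [h2, mul_zero]
      exact rnd_nonneg hG F hk s a

lemma pay_decomp (hG : G.IsGame) (v : S → ℝ) (l : ℝ) (s : S) (a b : M) :
    pay G (fun t => v t + l * ((v t)^2 - 1)) s a b
      = pay G v s a b + l * pay G (fun t => (v t)^2) s a b - l := by
  unfold pay
  have h1 : ∀ t : S, G.δ s a b t * (v t + l * ((v t)^2 - 1))
      = G.δ s a b t * v t + l * (G.δ s a b t * (v t)^2) - l * G.δ s a b t := by
    intro t; ring
  rw [Finset.sum_congr rfl fun t _ => h1 t, Finset.sum_sub_distrib, Finset.sum_add_distrib,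
    ← Finset.mul_sum, ← Finset.mul_sum, hG.2.2.2, mul_one]

/-- The heart of the proof: the rounded selector together with the perturbed
potential `u = v* + l(v*² − 1)` satisfies the one-step sub-invariance. -/
lemma cert_step (hG : G.IsGame) (F : Set S) {k : ℕ} (hk : 1 ≤ k) {κ l : ℝ}
    (hκ0 : 0 < κ) (hκB : κ ≤ Bq hG F / 8) (hl : l = 4 * κ / Bq hG F)
    (hkκ : 1 / (k:ℝ) ≤ κ * ximin hG F)
    {s : S} (hs : s ∈ F) {b : M} (hb : b ∈ G.Γ₂ s) :
    vstar hG F s + l * ((vstar hG F s)^2 - 1) ≤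
      ∑ a, rnd hG F k s a * pay G (fun t => vstar hG F t + l * ((vstar hG F t)^2 - 1)) s a b := by
  have hB := Bq_pos hG F
  have hB1 := Bq_le_one hG F
  have hκ1 : κ ≤ 1/8 := le_trans hκB (by linarith)
  have hl0 : 0 ≤ l := by rw [hl]; positivity
  have hl2 : l ≤ 1/2 := by
    rw [hl, div_le_iff₀ hB]; nlinarith
  set v := vstar hG F with hv
  set c := v s with hc
  set x := rnd hG F k s with hx
  set m := ∑ a, x a * pay G v s a b with hm
  set Mm := ∑ a, x a * pay G (fun t => (v t)^2) s a b with hMm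
  have hc0 : 0 ≤ c := vstar_nonneg hG F s
  have hc1 : c ≤ 1 := vstar_le_one hG F s
  have hx0 : ∀ a, 0 ≤ x a := rnd_nonneg hG F hk s
  have hx1 : ∑ a, x a = 1 := rnd_sum hG F hk s
  have hv0 : ∀ t, 0 ≤ v t := vstar_nonneg hG F
  have hv1 : ∀ t, v t ≤ 1 := vstar_le_one hG F
  -- rewrite the RHS
  have hRHS : ∑ a, x a * pay G (fun t => v t + l * ((v t)^2 - 1)) s a b
      = m + l * Mm - l := by
    rw [Finset.sum_congr rfl fun a _ => by rw [pay_decomp hG v l s a b]]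
    have h1 : ∀ a : M, x a * (pay G v s a b + l * pay G (fun t => (v t)^2) s a b - l)
        = x a * pay G v s a b + l * (x a * pay G (fun t => (v t)^2) s a b) - l * x a := by
      intro a; ring
    rw [Finset.sum_congr rfl fun a _ => h1 a, Finset.sum_sub_distrib, Finset.sum_add_distrib,
      ← Finset.mul_sum, ← Finset.mul_sum, hx1, mul_one]
  rw [hRHS]
  -- goal reduces to c + l c² ≤ m + l Mm
  rw [show v s + l * ((v s)^2 - 1) = c + l * c^2 - l by rw [← hc]; ring]
  have key : c + l * c^2 ≤ m + l * Mm := by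
    by_cases htight : ∀ a, x a ≠ 0 → ∀ t, G.δ s a b t ≠ 0 → v t = c
    · -- tight case : everything stays in the value class, exact equality
      have hpay : ∀ a, x a ≠ 0 → pay G v s a b = c := by
        intro a hxa
        unfold pay
        have h2 : ∀ t ∈ Finset.univ, G.δ s a b t * v t = G.δ s a b t * c := by
          intro t _
          by_cases hδ : G.δ s a b t = 0
          · rw [hδ, zero_mul, zero_mul]
          · rw [htight a hxa t hδ]
        rw [Finset.sum_congr rfl h2, ← Finset.sum_mul, hG.2.2.2, one_mul]
      have hpay2 : ∀ a, x a ≠ 0 → pay G (fun t => (v t)^2) s a b = c^2 := by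
        intro a hxa
        unfold pay
        have h2 : ∀ t ∈ Finset.univ, G.δ s a b t * (fun t => (v t)^2) t
            = G.δ s a b t * c^2 := by
          intro t _
          by_cases hδ : G.δ s a b t = 0
          · rw [hδ, zero_mul, zero_mul]
          · simp only
            rw [htight a hxa t hδ]
        rw [Finset.sum_congr rfl h2, ← Finset.sum_mul, hG.2.2.2, one_mul]
      have hmc : m = c := by
        have h1 : ∀ a ∈ Finset.univ, x a * pay G v s a b = x a * c := by
          intro a _
          by_cases hxa : x a = 0
          · rw [hxa, zero_mul, zero_mul]
          · rw [hpay a hxa]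
        rw [hm, Finset.sum_congr rfl h1, ← Finset.sum_mul, hx1, one_mul]
      have hMc : Mm = c^2 := by
        have h1 : ∀ a ∈ Finset.univ, x a * pay G (fun t => (v t)^2) s a b = x a * c^2 := by
          intro a _
          by_cases hxa : x a = 0
          · rw [hxa, zero_mul, zero_mul]
          · rw [hpay2 a hxa]
        rw [hMm, Finset.sum_congr rfl h1, ← Finset.sum_mul, hx1, one_mul]
      rw [hmc, hMc]
    · push_neg at htight
      obtain ⟨a₀, hxa₀, t₀, hδt₀, hvt₀⟩ := htight
      have hm0 : 0 ≤ m := Finset.sum_nonneg fun a _ =>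
        mul_nonneg (hx0 a) (pay_nonneg hG hv0 s a b)
      have hM0 : 0 ≤ Mm := Finset.sum_nonneg fun a _ =>
        mul_nonneg (hx0 a) (pay_nonneg hG (fun t => sq_nonneg (v t)) s a b)
      rcases eq_or_lt_of_le hc0 with hceq | hcpos
      · -- value zero : trivial
        have hc2 : c = 0 := hceq.symm
        rw [hc2]
        have : 0 ≤ l * Mm := mul_nonneg hl0 hM0
        nlinarith
      -- main case : positive value, strict exit
      have hξa₀ : xistar hG F s a₀ ≠ 0 := rnd_supp hG F s a₀ hxa₀
      have hκ01 : (0:ℝ) ≤ 1 - κ := by linarith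
      -- m ≥ (1-κ) c
      have hmge : (1 - κ) * c ≤ m := by
        have h1 : ∑ a, ((1 - κ) * xistar hG F s a) * pay G v s a b ≤ m := by
          apply Finset.sum_le_sum
          intro a _
          exact mul_le_mul_of_nonneg_right (rnd_lower hG F hk (le_of_lt hκ0) hkκ s a)
            (pay_nonneg hG hv0 s a b)
        have h2 : ∑ a, ((1 - κ) * xistar hG F s a) * pay G v s a b
            = (1 - κ) * ∑ a, xistar hG F s a * pay G v s a b := by
          rw [Finset.mul_sum]
          exact Finset.sum_congr rfl fun a _ => by ring
        have h3 := xistar_opt hG F hs hb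
        have h4 : (1 - κ) * c ≤ (1 - κ) * ∑ a, xistar hG F s a * pay G v s a b :=
          mul_le_mul_of_nonneg_left h3 hκ01
        linarith
      -- decomposition of the second moment
      set Q := ∑ a, x a * (∑ t, G.δ s a b t * (v t - c)^2) with hQdef
      have hMdecomp : Mm = Q + 2 * c * m - c^2 := by
        have h1 : ∀ a : M, pay G (fun t => (v t)^2) s a b
            = (∑ t, G.δ s a b t * (v t - c)^2) + 2 * c * pay G v s a b - c^2 := by
          intro a
          unfold pay
          have h2 : ∀ t ∈ Finset.univ, G.δ s a b t * (fun t => (v t)^2) t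
              = G.δ s a b t * (v t - c)^2 + 2 * c * (G.δ s a b t * v t)
                - c^2 * G.δ s a b t := by
            intro t _
            simp only
            ring
          rw [Finset.sum_congr rfl h2, Finset.sum_sub_distrib,
            Finset.sum_add_distrib, ← Finset.mul_sum, ← Finset.mul_sum, hG.2.2.2, mul_one]
        have h3 : ∀ a ∈ Finset.univ, x a * pay G (fun t => (v t)^2) s a b
            = x a * (∑ t, G.δ s a b t * (v t - c)^2) + 2 * c * (x a * pay G v s a b)
              - c^2 * x a := by
          intro a _
          rw [h1 a]; ring
        rw [hMm, Finset.sum_congr rfl h3, Finset.sum_sub_distrib,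
          Finset.sum_add_distrib, ← Finset.mul_sum, ← Finset.mul_sum, hx1, mul_one]
      -- lower bound on the variance term Q
      have hQge : Bq hG F / 2 ≤ Q := by
        have hgap : gap0 hG F ≤ |v t₀ - c| := gap0_le hG F hvt₀
        have hgap2 : (gap0 hG F)^2 ≤ (v t₀ - c)^2 := by
          have h0 := gap0_pos hG F
          calc (gap0 hG F)^2 ≤ |v t₀ - c|^2 := by
                apply pow_le_pow_left₀ (le_of_lt h0) hgap
            _ = (v t₀ - c)^2 := sq_abs _
        have hδmin : dmin G ≤ G.δ s a₀ b t₀ := dmin_le hG hδt₀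
        have hxmin : (1 - κ) * ximin hG F ≤ x a₀ := by
          have h5 := rnd_lower hG F hk (le_of_lt hκ0) hkκ s a₀
          have h6 := ximin_le hG F hξa₀
          nlinarith [ximin_pos hG F]
        have hinner : dmin G * (gap0 hG F)^2 ≤ ∑ t, G.δ s a₀ b t * (v t - c)^2 := by
          have h1 : G.δ s a₀ b t₀ * (v t₀ - c)^2 ≤ ∑ t, G.δ s a₀ b t * (v t - c)^2 :=
            Finset.single_le_sum (f := fun t => G.δ s a₀ b t * (v t - c)^2)
              (fun t _ => mul_nonneg (hG.2.2.1 s a₀ b t) (sq_nonneg _))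
              (Finset.mem_univ t₀)
          have h2 : dmin G * (gap0 hG F)^2 ≤ G.δ s a₀ b t₀ * (v t₀ - c)^2 := by
            apply mul_le_mul hδmin hgap2 (sq_nonneg _)
            exact le_trans (le_of_lt (dmin_pos hG)) hδmin
          linarith
        have hxm0 : (0:ℝ) ≤ (1 - κ) * ximin hG F :=
          mul_nonneg hκ01 (le_of_lt (ximin_pos hG F))
        have hterm : ((1 - κ) * ximin hG F) * (dmin G * (gap0 hG F)^2) ≤ Q := by
          have h1 : x a₀ * (∑ t, G.δ s a₀ b t * (v t - c)^2) ≤ Q := by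
            apply Finset.single_le_sum (f := fun a => x a * (∑ t, G.δ s a b t * (v t - c)^2))
              (fun a _ => mul_nonneg (hx0 a) (Finset.sum_nonneg fun t _ =>
                mul_nonneg (hG.2.2.1 s a b t) (sq_nonneg _))) (Finset.mem_univ a₀)
          have h2 : ((1 - κ) * ximin hG F) * (dmin G * (gap0 hG F)^2)
              ≤ x a₀ * (∑ t, G.δ s a₀ b t * (v t - c)^2) := by
            apply mul_le_mul hxmin hinner
            · exact mul_nonneg (le_of_lt (dmin_pos hG)) (sq_nonneg _)
            · exact le_trans hxm0 hxmin
          linarith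
        have hBq : ((1 - κ) * ximin hG F) * (dmin G * (gap0 hG F)^2)
            = (1 - κ) * Bq hG F := by rw [Bq]; ring
        rw [hBq] at hterm
        nlinarith
      -- final accounting
      have e1 : m + l * Mm - (c + l * c^2) = (m - c) * (1 + 2 * l * c) + l * Q := by
        rw [hMdecomp]; ring
      have h1 : 0 ≤ 1 + 2 * l * c := by positivity
      have h2 : (-(κ * c)) * (1 + 2 * l * c) ≤ (m - c) * (1 + 2 * l * c) := by
        apply mul_le_mul_of_nonneg_right _ h1
        nlinarith
      have hcsq : c^2 ≤ 1 := by nlinarith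
      have h3 : -(κ * (1 + 2 * l)) ≤ (-(κ * c)) * (1 + 2 * l * c) := by
        nlinarith [mul_nonneg (le_of_lt hκ0) (by linarith : (0:ℝ) ≤ 1 - c),
          mul_nonneg (mul_nonneg (le_of_lt hκ0) hl0) (by linarith : (0:ℝ) ≤ 1 - c^2)]
      have h4 : 2 * κ = l * (Bq hG F / 2) := by
        rw [hl]; field_simp; ring
      have h5 : l * (Bq hG F / 2) ≤ l * Q := mul_le_mul_of_nonneg_left hQge hl0
      have h6 : 2 * κ * l ≤ κ := by nlinarith
      linarith
  linarith

/-- the sub-invariance induction : `u` is a lower bound on `safeW` at every horizon. -/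
lemma safeW_ge_cert (hG : G.IsGame) (F : Set S) {ξ : S → M → ℝ} (hξ : IsSel1 G ξ)
    {u : S → ℝ} (hu1 : ∀ t, u t ≤ 1) (hu0 : ∀ t, t ∉ F → u t ≤ 0)
    (hstep : ∀ s ∈ F, ∀ b ∈ G.Γ₂ s, u s ≤ ∑ a, ξ s a * pay G u s a b)
    {σ₂ : List S → S → M → ℝ} (h₂ : IsStrat2 G σ₂) :
    ∀ n w s, u s ≤ safeW G (ml ξ) σ₂ F n w s := by
  intro n
  induction n with
  | zero =>
      intro w s
      by_cases h : s ∈ F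
      · simp only [safeW, h, if_true]
        exact hu1 s
      · simp only [safeW, h, if_false]
        exact hu0 s h
  | succ n ih =>
      intro w s
      rw [safeW_step]
      by_cases h : s ∈ F
      swap
      · simp only [h, if_false]
        exact hu0 s h
      simp only [h, if_true]
      have hinner : ∀ b ∈ G.Γ₂ s, u s ≤
          ∑ a, (ml ξ) w s a * ∑ t, G.δ s a b t * safeW G (ml ξ) σ₂ F n (w ++ [s]) t := by
        intro b hb
        have h1 : ∑ a, ξ s a * pay G u s a b ≤
            ∑ a, ξ s a * ∑ t, G.δ s a b t * safeW G (ml ξ) σ₂ F n (w ++ [s]) t := by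
          apply Finset.sum_le_sum
          intro a _
          apply mul_le_mul_of_nonneg_left _ ((hξ s).1 a)
          apply Finset.sum_le_sum
          intro t _
          exact mul_le_mul_of_nonneg_left (ih (w ++ [s]) t) (hG.2.2.1 s a b t)
        exact le_trans (hstep s h b hb) h1
      have hms : ∑ b, σ₂ w s b * u s ≤ ∑ b, σ₂ w s b *
          (∑ a, (ml ξ) w s a * ∑ t, G.δ s a b t * safeW G (ml ξ) σ₂ F n (w ++ [s]) t) := by
        apply Finset.sum_le_sum
        intro b _
        by_cases hσb : σ₂ w s b = 0
        · rw [hσb, zero_mul, zero_mul]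
        · exact mul_le_mul_of_nonneg_left (hinner b ((h₂ w s).2.1 b hσb)) ((h₂ w s).1 b)
      have hsum : ∑ b, σ₂ w s b * u s = u s := by
        rw [← Finset.sum_mul, (h₂ w s).2.2, one_mul]
      linarith

/-- for every `ε > 0` there is a `k`-uniform memoryless selector that
guarantees `vstar - ε`. -/
lemma exists_good (hG : G.IsGame) (F : Set S) {ε : ℝ} (hε : 0 < ε) :
    ∃ k₀ : ℕ, 1 ≤ k₀ ∧ ∃ ξ : S → M → ℝ, IsSel1 G ξ ∧ KUniform k₀ ξ ∧
      ∀ s, vstar hG F s - ε ≤ valSafeUnder G (ml ξ) F s := by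
  have hB := Bq_pos hG F
  have hB1 := Bq_le_one hG F
  have hxim := ximin_pos hG F
  set κ := min (Bq hG F / 8) (ε * Bq hG F / 4) with hκdef
  have hκ0 : 0 < κ := lt_min (by linarith) (by positivity)
  have hκB : κ ≤ Bq hG F / 8 := min_le_left _ _
  set l := 4 * κ / Bq hG F with hldef
  have hl0 : 0 ≤ l := by positivity
  have hlε : l ≤ ε := by
    rw [hldef, div_le_iff₀ hB]
    have := min_le_right (Bq hG F / 8) (ε * Bq hG F / 4)
    nlinarith
  set k := max 1 ⌈1 / (κ * ximin hG F)⌉₊ with hkdef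
  have hk1 : 1 ≤ k := le_max_left _ _
  have hkpos : (0:ℝ) < k := by exact_mod_cast hk1
  have hkκ : 1 / (k:ℝ) ≤ κ * ximin hG F := by
    have hcx : (0:ℝ) < κ * ximin hG F := by positivity
    have h1 : 1 / (κ * ximin hG F) ≤ (k:ℝ) := by
      have h2 : (⌈1 / (κ * ximin hG F)⌉₊ : ℝ) ≤ (k:ℝ) := by
        exact_mod_cast le_max_right 1 ⌈1 / (κ * ximin hG F)⌉₊
      exact le_trans (Nat.le_ceil _) h2
    rw [div_le_iff₀ hkpos]
    rw [div_le_iff₀ hcx] at h1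
    nlinarith
  set ξ := rnd hG F k with hξdef
  set u := fun t => vstar hG F t + l * ((vstar hG F t)^2 - 1) with hudef
  have hu1 : ∀ t, u t ≤ 1 := by
    intro t
    have h1 := vstar_le_one hG F t
    have h2 := vstar_nonneg hG F t
    have h3 : (vstar hG F t)^2 ≤ 1 := by nlinarith
    simp only [hudef]
    nlinarith
  have hu0 : ∀ t, t ∉ F → u t ≤ 0 := by
    intro t ht
    simp only [hudef, vstar_eq_zero_off hG F t ht]
    nlinarith
  have huv : ∀ t, vstar hG F t - ε ≤ u t := by
    intro t
    have h1 := vstar_nonneg hG F t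
    have h2 := vstar_le_one hG F t
    simp only [hudef]
    nlinarith
  have hsel : IsSel1 G ξ := rnd_isSel hG F hk1
  have hstrat : IsStrat1 G (ml ξ) := ml_isStrat1 hsel
  have hstep : ∀ s ∈ F, ∀ b ∈ G.Γ₂ s, u s ≤ ∑ a, ξ s a * pay G u s a b := by
    intro s hs b hb
    exact cert_step hG F hk1 hκ0 hκB hldef hkκ hs hb
  refine ⟨k, hk1, ξ, hsel, rnd_kuniform hG F hk1, fun s => ?_⟩
  have hval : ∀ σ₂ : {σ // IsStrat2 G σ}, u s ≤ prSafe G (ml ξ) σ₂.1 F s := by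
    intro σ₂
    exact le_ciInf fun n => safeW_ge_cert hG F hsel hu1 hu0 hstep σ₂.2 n [] s
  have h2 : u s ≤ valSafeUnder G (ml ξ) F s := by
    have := strat2_nonempty hG
    exact le_ciInf hval
  linarith [huv s]

lemma kuniform_mono {k k' : ℕ} (h : k ≤ k') {ξ : S → M → ℝ} (hξ : KUniform k ξ) :
    KUniform k' ξ := by
  intro s a
  obtain ⟨i, j, hij, hjk, he⟩ := hξ s a
  exact ⟨i, j, hij, le_trans hjk h, he⟩

lemma uniformSel_isSel (hG : G.IsGame) : IsSel1 G (uniformSel G) :=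
  fun s => uniform_mem_distSet (hG.1 s)

lemma uniformSel_kuniform (hG : G.IsGame) {k : ℕ} (hk : Fintype.card M ≤ k) :
    KUniform k (uniformSel G) := by
  intro s a
  by_cases h : a ∈ G.Γ₁ s
  · refine ⟨1, (G.Γ₁ s).card, Finset.card_pos.2 (hG.1 s), ?_, ?_⟩
    · exact le_trans (by rw [← Finset.card_univ]; exact Finset.card_le_univ _) hk
    · simp [uniformSel, h]
  · refine ⟨0, 1, zero_le_one, ?_, by simp [uniformSel, h]⟩
    have hM : 0 < Fintype.card M := Fintype.card_pos_iff.2 ⟨(hG.1 s).choose⟩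
    omega

lemma zk_bddAbove (hG : G.IsGame) (F : Set S) (k : ℕ) (s : S) :
    BddAbove {x | ∃ ξ : S → M → ℝ, IsSel1 G ξ ∧ KUniform k ξ ∧
      x = valSafeUnder G (ml ξ) F s} := by
  refine ⟨1, ?_⟩
  rintro r ⟨ξ, h1, h2, rfl⟩
  exact valSafeUnder_le_one F hG (fun w s' a => ((ml_isStrat1 h1) w s').1 a) s

lemma valSafe_nonneg (hG : G.IsGame) (F : Set S) (s : S) : 0 ≤ valSafe G F s := by
  have h1 : valSafeUnder G (purestrat1 hG) F s ≤ valSafe G F s :=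
    valSafeUnder_le_valSafe F hG (purestrat1_isStrat hG) s
  have h2 : 0 ≤ valSafeUnder G (purestrat1 hG) F s :=
    valSafeUnder_nonneg F hG (fun w s' a => ((purestrat1_isStrat hG) w s').1 a) s
  linarith

lemma zk_le_valSafe (hG : G.IsGame) (F : Set S) (k : ℕ) (s : S) :
    zk G F k s ≤ valSafe G F s := by
  apply Real.sSup_le _ (valSafe_nonneg hG F s)
  rintro r ⟨ξ, h1, h2, rfl⟩
  exact valSafeUnder_le_valSafe F hG (ml_isStrat1 h1) s

end Certificate

end Aux

end CGame
/-- **Monotone convergence of the `k`-uniform values to the safety value.**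
For `k ≥ |Moves|`, the best `k`-uniform memoryless values `z^k` are monotone in
`k` and converge pointwise to `⟨1⟩val(Safe F)`. -/
theorem k_uniform_values_monotone_tendsto
    {S M : Type} [Fintype S] [DecidableEq S] [Fintype M] [DecidableEq M]
    (G : CGame S M) (hG : G.IsGame) (F : Set S) :
    (∀ k, Fintype.card M ≤ k → ∀ s : S, CGame.zk G F k s ≤ CGame.zk G F (k + 1) s) ∧
    ∀ s : S, Filter.Tendsto (fun k => CGame.zk G F k s) Filter.atTop
      (nhds (CGame.valSafe G F s)) := by
  constructor
  · intro k hk s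
    apply csSup_le_csSup (CGame.Aux.zk_bddAbove hG F (k+1) s)
    · exact ⟨_, CGame.uniformSel G, CGame.Aux.uniformSel_isSel hG,
        CGame.Aux.uniformSel_kuniform hG hk, rfl⟩
    · rintro r ⟨ξ, h1, h2, rfl⟩
      exact ⟨ξ, h1, CGame.Aux.kuniform_mono (Nat.le_succ k) h2, rfl⟩
  · intro s
    rw [Metric.tendsto_atTop]
    intro ε hε
    obtain ⟨k₀, hk₀1, ξ, hsel, hku, hbound⟩ :=
      CGame.Aux.exists_good hG F (by linarith : (0:ℝ) < ε/2)
    refine ⟨k₀, fun n hn => ?_⟩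
    have hle : CGame.zk G F n s ≤ CGame.valSafe G F s :=
      CGame.Aux.zk_le_valSafe hG F n s
    have hmem : CGame.valSafeUnder G (CGame.ml ξ) F s ∈
        {x | ∃ ξ' : S → M → ℝ, CGame.IsSel1 G ξ' ∧ CGame.KUniform n ξ' ∧
          x = CGame.valSafeUnder G (CGame.ml ξ') F s} :=
      ⟨ξ, hsel, CGame.Aux.kuniform_mono hn hku, rfl⟩
    have hge : CGame.valSafeUnder G (CGame.ml ξ) F s ≤ CGame.zk G F n s :=
      le_csSup (CGame.Aux.zk_bddAbove hG F n s) hmem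
    have hv1 : CGame.Aux.vstar hG F s - ε/2 ≤ CGame.valSafeUnder G (CGame.ml ξ) F s :=
      hbound s
    have hv2 : CGame.valSafe G F s ≤ CGame.Aux.vstar hG F s :=
      CGame.Aux.valSafe_le_vstar hG F s
    rw [Real.dist_eq, abs_lt]
    constructor <;> linarith
end
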